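/- arXiv:2603.29008 — 5 statements merged into one kernel-verified Lean document; each statement's English description precedes it below -/
import Mathlib

section
/- Let n ≥ 1 be an integer. A subgroup H of ℤ^n (equipped with a word metric from a finite generating set) is coarsely separating if and only if H has rank n−1. -/
/-! ## Right-angled Artin groups -/

/-- The commutator relations defining the right-angled Artin group of a graph. -/
def raagRels {V : Type*} (Γ : SimpleGraph V) : Set (FreeGroup V) :=
  {r | ∃ u v : V, Γ.Adj u v ∧
    r = FreeGroup.of u * FreeGroup.of v * (FreeGroup.of u)⁻¹ * (FreeGroup.of v)⁻¹}

/-- The right-angled Artin group of a simple graph. -/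
abbrev RAAG {V : Type*} (Γ : SimpleGraph V) : Type _ := PresentedGroup (raagRels Γ)

/-- The canonical generator of `RAAG Γ` associated to a vertex. -/
abbrev RAAG.gen {V : Type*} (Γ : SimpleGraph V) (v : V) : RAAG Γ :=
  PresentedGroup.of v

/-- The canonical generating set of a right-angled Artin group: its vertex generators. -/
def raagGens {V : Type*} (Γ : SimpleGraph V) : Set (RAAG Γ) :=
  Set.range (RAAG.gen Γ)

/-- The subgroup of `RAAG Γ` generated by (the generators corresponding to) a set of
vertices. -/
def vertexSubgroup {V : Type*} (Γ : SimpleGraph V) (Λ : Set V) : Subgroup (RAAG Γ) :=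
  Subgroup.closure (RAAG.gen Γ '' Λ)

/-! ## Free abelian groups ℤ^n (written multiplicatively) -/

/-- The free abelian group `ℤ^n` of rank `n`, written multiplicatively. -/
abbrev FreeAb (n : ℕ) : Type := Multiplicative (Fin n → ℤ)

/-! ## Word metric and coarse separation -/

section Coarse

variable {G : Type*} [Group G]

/-- `S` is a finite generating set of `G`. -/
def IsFinGenSet (S : Set G) : Prop := S.Finite ∧ Subgroup.closure S = ⊤

/-- One step in the Cayley graph of `(G, S)`: multiply on the right by a generator or
the inverse of a generator. -/
def WordStep (S : Set G) (x y : G) : Prop := ∃ s : G, (s ∈ S ∨ s⁻¹ ∈ S) ∧ y = x * s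

/-- The word distance between two elements of `G`, with respect to the (symmetrised)
generating set `S`, with value `⊤` if `y` is not reachable from `x`. -/
noncomputable def wordDist (S : Set G) (x y : G) : ℕ∞ :=
  sInf {n : ℕ∞ | ∃ l : List G, (∀ s ∈ l, s ∈ S ∨ s⁻¹ ∈ S) ∧ y = x * l.prod ∧ n = l.length}

/-- The word distance from a subset `A ⊆ G` to a point. -/
noncomputable def setWordDist (S : Set G) (A : Set G) (x : G) : ℕ∞ :=
  ⨅ a ∈ A, wordDist S a x

/-- The (closed) `L`-neighbourhood of a subset `A ⊆ G` in the word metric of `S`. -/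
def wordNbhd (S : Set G) (A : Set G) (L : ℕ) : Set G :=
  {x | setWordDist S A x ≤ (L : ℕ∞)}

/-- Two points are connected within the subset `K` of the Cayley graph of `(G, S)` if they
are joined by a path of the Cayley graph staying in `K`. -/
def ConnectedInCayley (S : Set G) (K : Set G) (x y : G) : Prop :=
  Relation.ReflTransGen (fun a b => a ∈ K ∧ b ∈ K ∧ WordStep S a b) x y

/-- The connected component of `x` in `K ⊆ G` (for the Cayley graph of `(G,S)`) is *deep*
with respect to `A`: it contains points arbitrarily far away from `A`. -/
def DeepComponent (S : Set G) (A : Set G) (K : Set G) (x : G) : Prop :=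
  ∀ D : ℕ, ∃ y : G, ConnectedInCayley S K x y ∧ (D : ℕ∞) < setWordDist S A y

/-- A subset `A ⊆ G` *coarsely separates* `G` (with respect to the word metric associated
to `S`): the complement of some neighbourhood of `A` has at least two deep connected
components. -/
def CoarselySeparates (S : Set G) (A : Set G) : Prop :=
  ∃ L : ℕ, ∃ x y : G, x ∈ (wordNbhd S A L)ᶜ ∧ y ∈ (wordNbhd S A L)ᶜ ∧
    ¬ ConnectedInCayley S (wordNbhd S A L)ᶜ x y ∧
    DeepComponent S A (wordNbhd S A L)ᶜ x ∧ DeepComponent S A (wordNbhd S A L)ᶜ y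

end Coarse

/-! ## Splittings of groups -/

/-- The amalgamated free product of two groups along two injections of a common
subgroup, built as a quotient of the free product `Monoid.Coprod`. -/
def AmalgamatedProduct {A B C : Type*} [Group A] [Group B] [Group C]
    (φ₁ : C →* A) (φ₂ : C →* B) : Type _ :=
  (Monoid.Coprod A B) ⧸ Subgroup.normalClosure
    (Set.range fun c => Monoid.Coprod.inl (φ₁ c) * (Monoid.Coprod.inr (φ₂ c))⁻¹)

noncomputable instance {A B C : Type*} [Group A] [Group B] [Group C]
    (φ₁ : C →* A) (φ₂ : C →* B) : Group (AmalgamatedProduct φ₁ φ₂) := by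
  unfold AmalgamatedProduct; infer_instance

/-- A non-trivial decomposition of `G` as an amalgamated free product `A *_C B`,
with edge group `C`. -/
structure AmalgamSplitting (G : Type u) [Group G] (C : Type v) [Group C] where
  A : Type u
  B : Type u
  [grpA : Group A]
  [grpB : Group B]
  φ₁ : C →* A
  φ₂ : C →* B
  inj₁ : Function.Injective φ₁
  inj₂ : Function.Injective φ₂
  notSurj₁ : ¬ Function.Surjective φ₁
  notSurj₂ : ¬ Function.Surjective φ₂
  iso : G ≃* AmalgamatedProduct φ₁ φ₂

/-- A decomposition of `G` as an HNN extension with edge group (isomorphic to) `C`. -/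
structure HNNSplitting (G : Type u) [Group G] (C : Type v) [Group C] where
  K : Type u
  [grpK : Group K]
  A : Subgroup K
  B : Subgroup K
  φ : A ≃* B
  isoC : C ≃* A
  iso : G ≃* HNNExtension K A B φ

/-- `G` splits (non-trivially) over a subgroup isomorphic to `C`: it decomposes
non-trivially as an amalgamated free product or as an HNN extension with edge group `C`. -/
def SplitsOver (G : Type u) [Group G] (C : Type v) [Group C] : Prop :=
  Nonempty (AmalgamSplitting G C) ∨ Nonempty (HNNSplitting G C)

/-- `G` virtually splits over (a subgroup isomorphic to) `C`: some finite-index subgroup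
of `G` splits over a subgroup isomorphic to `C`. -/
def VirtuallySplitsOver (G : Type u) [Group G] (C : Type v) [Group C] : Prop :=
  ∃ H : Subgroup G, H.FiniteIndex ∧ SplitsOver H C

/-! ## Graph-theoretic conditions -/

section Graph

variable {V : Type*}

/-- Removing the vertex set `s` from `Γ` disconnects the graph: the induced subgraph on
the complement of `s` is not preconnected. -/
def SeparatesGraph (Γ : SimpleGraph V) (s : Set V) : Prop :=
  ¬ (Γ.induce {v : V | v ∉ s}).Preconnected

/-- `Γ` is a complete graph. -/
def IsCompleteGraph (Γ : SimpleGraph V) : Prop := ∀ u v : V, u ≠ v → Γ.Adj u v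

/-- A *complete cut* of a graph: a complete subgraph (clique) whose removal disconnects
the graph. -/
def CompleteCut (Γ : SimpleGraph V) (s : Set V) : Prop :=
  Γ.IsClique s ∧ SeparatesGraph Γ s

/-- Condition (iv) of the main theorem: `Γ` is a complete graph with `n+1` vertices, or
contains a complete subgraph of size `n` having a subgraph that separates `Γ`. -/
def CliqueCutCondition (Γ : SimpleGraph V) [Fintype V] (n : ℕ) : Prop :=
  (IsCompleteGraph Γ ∧ Fintype.card V = n + 1) ∨
  (∃ t : Finset V, Γ.IsNClique n t ∧ ∃ s : Set V, s ⊆ ↑t ∧ SeparatesGraph Γ s)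

end Graph

/-! ## Links and stars -/

section LinkStar

variable {V : Type*}

/-- The link of a set of vertices: all vertices adjacent to every vertex of `Λ`. -/
def linkSet (Γ : SimpleGraph V) (Λ : Set V) : Set V := {v | ∀ u ∈ Λ, Γ.Adj v u}

/-- The star of a set of vertices: `Λ` together with its link. -/
def starSet (Γ : SimpleGraph V) (Λ : Set V) : Set V := Λ ∪ linkSet Γ Λ

/-- The star of a vertex: the vertex together with its neighbours. -/
def starOfVertex (Γ : SimpleGraph V) (u : V) : Set V := {v | v = u ∨ Γ.Adj u v}

end LinkStar

/-! ## Coarse geometry of graphs -/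

section CoarseGraph

variable {W : Type*}

/-- The `L`-neighbourhood of a set of vertices in a graph, for the graph metric. -/
def graphNbhd (X : SimpleGraph W) (A : Set W) (L : ℕ) : Set W :=
  {x | ∃ a ∈ A, X.dist a x ≤ L}

/-- Two vertices are connected within `K`: joined by a path of `X` staying in `K`. -/
def ConnectedWithin (X : SimpleGraph W) (K : Set W) (x y : W) : Prop :=
  Relation.ReflTransGen (fun a b => a ∈ K ∧ b ∈ K ∧ X.Adj a b) x y

/-- `x` is at graph distance at least `D` from every point of `A`. -/
def FarFrom (X : SimpleGraph W) (A : Set W) (D : ℕ) (x : W) : Prop :=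
  ∀ a ∈ A, D ≤ X.dist a x

/-- A subset `Y` of a graph is coarsely connected: for some `r ≥ 0`, any two points of `Y`
are joined by an `r`-chain inside `Y`. -/
def CoarselyConnectedIn (X : SimpleGraph W) (Y : Set W) : Prop :=
  ∃ r : ℕ, ∀ x ∈ Y, ∀ y ∈ Y,
    Relation.ReflTransGen (fun a b => a ∈ Y ∧ b ∈ Y ∧ X.dist a b ≤ r) x y

/-- A subset `Y` of a graph `X` is coarsely separated by a family `Zs` of subsets:
for some `L ≥ 0` and every `D ≥ 0`, there is `Z ∈ Zs` such that `Y` minus the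
`L`-neighbourhood of `Z` has at least two connected components containing points at
distance at least `D` from `Z`. -/
def CoarselySeparatedByFamily (X : SimpleGraph W) (Y : Set W) (Zs : Set (Set W)) : Prop :=
  ∃ L : ℕ, ∀ D : ℕ, ∃ Z ∈ Zs, ∃ x ∈ Y \ graphNbhd X Z L, ∃ y ∈ Y \ graphNbhd X Z L,
    ¬ ConnectedWithin X (Y \ graphNbhd X Z L) x y ∧ FarFrom X Z D x ∧ FarFrom X Z D y

/-- `Z` coarsely separates `Y` from `W'` in the graph `X`: some neighbourhood of `Z`
separates all points of `Y` sufficiently far from `Z` from all points of `W'`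
sufficiently far from `Z`. -/
def CoarselySeparatesFrom (X : SimpleGraph W) (Z Y W' : Set W) : Prop :=
  ∃ L D₀ : ℕ, ∀ y ∈ Y, ∀ w ∈ W', FarFrom X Z D₀ y → FarFrom X Z D₀ w →
    ¬ ConnectedWithin X (graphNbhd X Z L)ᶜ y w

open Multiplicative

namespace ZnP

/-! ### ℕ∞ infimum attainment -/

lemma enat_sInf_mem {A : Set ℕ∞} (h : A.Nonempty) : sInf A ∈ A := csInf_mem h

/-! ### Generic word-metric lemmas -/

section words
variable {G : Type*} [Group G] {S : Set G}

/-- `l` is a word in the symmetrised alphabet. -/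
def IsWord (S : Set G) (l : List G) : Prop := ∀ s ∈ l, s ∈ S ∨ s⁻¹ ∈ S

lemma wordDist_le_len {l : List G} (hl : IsWord S l) (x : G) :
    wordDist S x (x * l.prod) ≤ (l.length : ℕ∞) :=
  sInf_le ⟨l, hl, rfl, rfl⟩

lemma exists_word_of_gen (hgen : Subgroup.closure S = ⊤) (g : G) :
    ∃ l : List G, IsWord S l ∧ l.prod = g := by
  have hg : g ∈ (Subgroup.closure S).toSubmonoid := by
    rw [hgen]; trivial
  rw [Subgroup.closure_toSubmonoid] at hg
  obtain ⟨l, hl, hprod⟩ := Submonoid.exists_list_of_mem_closure hg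
  refine ⟨l, fun s hs => ?_, hprod⟩
  rcases hl s hs with h | h
  · exact Or.inl h
  · exact Or.inr (Set.mem_inv.mp h)

lemma wordDist_ne_top (hgen : Subgroup.closure S = ⊤) (x y : G) :
    wordDist S x y ≠ ⊤ := by
  obtain ⟨l, hl, hprod⟩ := exists_word_of_gen hgen (x⁻¹ * y)
  have : wordDist S x y ≤ (l.length : ℕ∞) := by
    have := wordDist_le_len hl x
    rwa [hprod, mul_inv_cancel_left] at this
  exact fun htop => by simp [htop] at this

lemma exists_word_of_le {x y : G} {k : ℕ} (h : wordDist S x y ≤ (k : ℕ∞)) :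
    ∃ l : List G, IsWord S l ∧ y = x * l.prod ∧ l.length ≤ k := by
  set A : Set ℕ∞ :=
    {m | ∃ l : List G, (∀ s ∈ l, s ∈ S ∨ s⁻¹ ∈ S) ∧ y = x * l.prod ∧ m = l.length} with hA
  have hne : A.Nonempty := by
    by_contra hemp
    rw [Set.not_nonempty_iff_eq_empty] at hemp
    have : wordDist S x y = ⊤ := by
      unfold wordDist; rw [← hA, hemp, sInf_empty]
    rw [this] at h
    exact absurd h (by simp)
  have hmem : sInf A ∈ A := enat_sInf_mem hne
  obtain ⟨l, hl, hprod, hlen⟩ := hmem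
  refine ⟨l, hl, hprod, ?_⟩
  have : (l.length : ℕ∞) ≤ (k : ℕ∞) := by
    rw [← hlen]; exact h
  exact_mod_cast this

lemma wordDist_triangle_nat {x y z : G} {k₁ k₂ : ℕ}
    (h₁ : wordDist S x y ≤ (k₁ : ℕ∞)) (h₂ : wordDist S y z ≤ (k₂ : ℕ∞)) :
    wordDist S x z ≤ ((k₁ + k₂ : ℕ) : ℕ∞) := by
  obtain ⟨l₁, hl₁, he₁, hlen₁⟩ := exists_word_of_le h₁
  obtain ⟨l₂, hl₂, he₂, hlen₂⟩ := exists_word_of_le h₂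
  have hw : IsWord S (l₁ ++ l₂) := by
    intro s hs; rcases List.mem_append.mp hs with h | h
    exacts [hl₁ s h, hl₂ s h]
  have : z = x * (l₁ ++ l₂).prod := by
    rw [List.prod_append, ← mul_assoc, ← he₁, ← he₂]
  calc wordDist S x z ≤ ((l₁ ++ l₂).length : ℕ∞) := this ▸ wordDist_le_len hw x
    _ ≤ ((k₁ + k₂ : ℕ) : ℕ∞) := by
        simp only [List.length_append]
        exact_mod_cast Nat.add_le_add hlen₁ hlen₂

lemma wordDist_mul_left (a x y : G) :
    wordDist S (a * x) (a * y) = wordDist S x y := by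
  unfold wordDist
  congr 1
  ext m
  constructor
  · rintro ⟨l, hl, he, hlen⟩
    exact ⟨l, hl, by rw [mul_assoc] at he; exact mul_left_cancel he, hlen⟩
  · rintro ⟨l, hl, he, hlen⟩
    exact ⟨l, hl, by rw [mul_assoc, ← he], hlen⟩

lemma wordDist_one_mul_le {x y : G} {k₁ k₂ : ℕ}
    (h₁ : wordDist S 1 x ≤ (k₁ : ℕ∞)) (h₂ : wordDist S 1 y ≤ (k₂ : ℕ∞)) :
    wordDist S 1 (x * y) ≤ ((k₁ + k₂ : ℕ) : ℕ∞) := by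
  have h₂' : wordDist S x (x * y) ≤ (k₂ : ℕ∞) := by
    have := wordDist_mul_left (S := S) x 1 y
    rw [mul_one] at this
    rw [this]; exact h₂
  exact wordDist_triangle_nat h₁ h₂'

lemma wordDist_one_inv {x : G} {k : ℕ} (h : wordDist S 1 x ≤ (k : ℕ∞)) :
    wordDist S 1 x⁻¹ ≤ (k : ℕ∞) := by
  obtain ⟨l, hl, he, hlen⟩ := exists_word_of_le h
  rw [one_mul] at he
  have hw : IsWord S ((l.map fun s => s⁻¹).reverse) := by
    intro s hs
    simp only [List.mem_reverse, List.mem_map] at hs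
    obtain ⟨t, ht, rfl⟩ := hs
    rcases hl t ht with h' | h'
    · exact Or.inr (by rwa [inv_inv])
    · exact Or.inl h'
  have hp : x⁻¹ = 1 * ((l.map fun s => s⁻¹).reverse).prod := by
    rw [one_mul, ← List.prod_inv_reverse, he]
  calc wordDist S 1 x⁻¹ ≤ _ := hp ▸ wordDist_le_len hw 1
    _ ≤ (k : ℕ∞) := by
        simp only [List.length_reverse, List.length_map]
        exact_mod_cast hlen

lemma wordDist_refl_le (x : G) : wordDist S x x ≤ ((0:ℕ) : ℕ∞) := by
  have := wordDist_le_len (S := S) (l := []) (fun s hs => by simp at hs) x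
  simpa using this

lemma wordDist_one_pow {g : G} {k : ℕ} (h : wordDist S 1 g ≤ (k : ℕ∞)) (m : ℕ) :
    wordDist S 1 (g ^ m) ≤ ((m * k : ℕ) : ℕ∞) := by
  induction m with
  | zero => simpa using wordDist_refl_le (S := S) 1
  | succ m ih =>
      have := wordDist_one_mul_le ih h
      rw [← pow_succ g m] at this
      convert this using 2
      ring

lemma wordDist_one_zpow {g : G} {k : ℕ} (h : wordDist S 1 g ≤ (k : ℕ∞)) (t : ℤ) :
    wordDist S 1 (g ^ t) ≤ ((t.natAbs * k : ℕ) : ℕ∞) := by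
  have hbase : wordDist S 1 (g ^ (t.natAbs : ℕ)) ≤ ((t.natAbs * k : ℕ) : ℕ∞) :=
    wordDist_one_pow h t.natAbs
  rcases Int.natAbs_eq t with ht | ht
  · rw [ht, zpow_natCast]; exact hbase
  · rw [ht, zpow_neg, zpow_natCast]; simpa [Int.natAbs_abs] using wordDist_one_inv hbase

end words

section wordsComm
variable {G : Type*} [CommGroup G] {S : Set G}

lemma wordDist_one_prod {ι : Type*} (F : Finset ι) (f : ι → G) (b : ι → ℕ)
    (h : ∀ i ∈ F, wordDist S 1 (f i) ≤ (b i : ℕ∞)) :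
    wordDist S 1 (∏ i ∈ F, f i) ≤ ((∑ i ∈ F, b i : ℕ) : ℕ∞) := by
  induction F using Finset.cons_induction with
  | empty => simpa using wordDist_refl_le (S := S) 1
  | cons j F hj ih =>
      rw [Finset.prod_cons, Finset.sum_cons]
      exact wordDist_one_mul_le (h j (Finset.mem_cons_self j F))
        (ih fun i hi => h i (Finset.mem_cons_of_mem hi))

end wordsComm

section paths
variable {G : Type*} [Group G] {S : Set G}


lemma connected_of_word {K : Set G} {l : List G} (hl : IsWord S l) (x : G)
    (hK : ∀ t : ℕ, t ≤ l.length → x * (l.take t).prod ∈ K) :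
    ConnectedInCayley S K x (x * l.prod) := by
  induction l generalizing x with
  | nil => simp only [List.prod_nil, mul_one]; exact Relation.ReflTransGen.refl
  | cons s t ih =>
      have hx : x ∈ K := by simpa using hK 0 (Nat.zero_le _)
      have hxs : x * s ∈ K := by
        have := hK 1 (by simp)
        simpa using this
      have hstep : (fun a b => a ∈ K ∧ b ∈ K ∧ WordStep S a b) x (x * s) :=
        ⟨hx, hxs, s, hl s (List.mem_cons_self), rfl⟩
      have htail : ConnectedInCayley S K (x * s) ((x * s) * t.prod) := by
        apply ih (fun s' hs' => hl s' (List.mem_cons_of_mem s hs'))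
        intro i hi
        have := hK (i + 1) (by simpa using Nat.succ_le_succ hi)
        simpa [List.take_succ_cons, mul_assoc] using this
      have : ConnectedInCayley S K x ((x * s) * t.prod) :=
        Relation.ReflTransGen.head hstep htail
      simpa [mul_assoc] using this

lemma connected_symm {K : Set G} {x y : G}
    (h : ConnectedInCayley S K x y) : ConnectedInCayley S K y x := by
  have hsym : Symmetric (fun a b => a ∈ K ∧ b ∈ K ∧ WordStep S a b) := by
    rintro a b ⟨ha, hb, s, hs, rfl⟩
    refine ⟨hb, ha, s⁻¹, ?_, by group⟩
    rcases hs with h' | h'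
    · exact Or.inr (by rwa [inv_inv])
    · exact Or.inl h'
  letI : Std.Symm (fun a b => a ∈ K ∧ b ∈ K ∧ WordStep S a b) := ⟨hsym⟩
  exact (Relation.ReflTransGen.symmetric (r := fun a b => a ∈ K ∧ b ∈ K ∧ WordStep S a b)).symm _ _ h

end paths

end ZnP

open Multiplicative

namespace ZnP

section setdist
variable {G : Type*} [Group G] {S : Set G}

lemma setWordDist_le_wordDist {A : Set G} {x a : G} (ha : a ∈ A) :
    setWordDist S A x ≤ wordDist S a x :=
  iInf₂_le a ha

lemma exists_of_setWordDist_le {A : Set G} {x : G} {L : ℕ}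
    (h : setWordDist S A x ≤ (L : ℕ∞)) :
    ∃ a ∈ A, wordDist S a x ≤ (L : ℕ∞) := by
  unfold setWordDist at h
  rw [← sInf_image] at h
  have hne : ((fun a => wordDist S a x) '' A).Nonempty := by
    by_contra hemp
    rw [Set.not_nonempty_iff_eq_empty] at hemp
    rw [hemp, sInf_empty] at h
    exact absurd h (by simp)
  obtain ⟨a, ha, heq⟩ := enat_sInf_mem hne
  exact ⟨a, ha, le_trans heq.le h⟩

end setdist

section zn
variable {n : ℕ}

noncomputable def crd (bM : Module.Basis (Fin n) ℤ (Fin n → ℤ)) (x : FreeAb n) : Fin n → ℤ :=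
  bM.equivFun x.toAdd

noncomputable def pt (bM : Module.Basis (Fin n) ℤ (Fin n → ℤ)) (u : Fin n → ℤ) : FreeAb n :=
  Multiplicative.ofAdd (bM.equivFun.symm u)

variable {bM : Module.Basis (Fin n) ℤ (Fin n → ℤ)}

@[simp] lemma crd_pt (u : Fin n → ℤ) : crd bM (pt bM u) = u := by
  unfold crd pt
  rw [toAdd_ofAdd, LinearEquiv.apply_symm_apply]

@[simp] lemma pt_crd (x : FreeAb n) : pt bM (crd bM x) = x := by
  unfold crd pt
  rw [LinearEquiv.symm_apply_apply, ofAdd_toAdd]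

lemma crd_mul (x y : FreeAb n) : crd bM (x * y) = crd bM x + crd bM y := by
  unfold crd
  rw [toAdd_mul, map_add]

@[simp] lemma crd_one : crd bM (1 : FreeAb n) = 0 := by
  unfold crd
  rw [toAdd_one, map_zero]

lemma crd_inv (x : FreeAb n) : crd bM x⁻¹ = -crd bM x := by
  unfold crd
  rw [toAdd_inv, map_neg]

lemma toAdd_pt (u : Fin n → ℤ) : (pt bM u).toAdd = ∑ j, u j • bM j := by
  unfold pt
  rw [toAdd_ofAdd, Module.Basis.equivFun_symm_apply]

lemma pt_eq_ofAdd_sum (u : Fin n → ℤ) :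
    pt bM u = Multiplicative.ofAdd (∑ j, u j • bM j) := by
  unfold pt
  rw [Module.Basis.equivFun_symm_apply]

lemma equivFun_symm_single (j : Fin n) :
    bM.equivFun.symm (Pi.single j (1 : ℤ)) = bM j := by
  rw [Module.Basis.equivFun_symm_apply]
  rw [Finset.sum_eq_single j]
  · simp
  · intro i _ hij
    simp [Pi.single_apply, hij]
  · intro h
    exact absurd (Finset.mem_univ j) h

lemma pt_update_add (u : Fin n → ℤ) (j : Fin n) (d : ℤ) :
    pt bM (Function.update u j (u j + d)) = pt bM u * Multiplicative.ofAdd (d • bM j) := by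
  unfold pt
  rw [← ofAdd_add]
  congr 1
  have hu : Function.update u j (u j + d) = u + d • Pi.single j (1 : ℤ) := by
    funext i
    by_cases h : i = j
    · subst h; simp
    · simp [Function.update_apply, h, Pi.single_apply]
  rw [hu, map_add, map_smul, equivFun_symm_single]

/-! ### The subgroup as a submodule -/

def subN (H : Subgroup (FreeAb n)) : Submodule ℤ (Fin n → ℤ) where
  carrier := {v | Multiplicative.ofAdd v ∈ H}
  add_mem' := fun {a b} ha hb => by
    show Multiplicative.ofAdd (a + b) ∈ H
    rw [ofAdd_add]
    exact mul_mem (show Multiplicative.ofAdd a ∈ H from ha)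
      (show Multiplicative.ofAdd b ∈ H from hb)
  zero_mem' := by
    show Multiplicative.ofAdd (0 : Fin n → ℤ) ∈ H
    rw [ofAdd_zero]
    exact one_mem H
  smul_mem' := fun c {v} hv => by
    show Multiplicative.ofAdd (c • v) ∈ H
    rw [ofAdd_zsmul]
    exact zpow_mem (show Multiplicative.ofAdd v ∈ H from hv) c

lemma mem_subN {H : Subgroup (FreeAb n)} {v : Fin n → ℤ} :
    v ∈ subN H ↔ Multiplicative.ofAdd v ∈ H := Iff.rfl

end zn

end ZnP

open Multiplicative

namespace ZnP

section est
variable {n : ℕ} {H : Subgroup (FreeAb n)} {S : Set (FreeAb n)}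
variable {bM : Module.Basis (Fin n) ℤ (Fin n → ℤ)}
variable {r : ℕ} {emb : Fin r ↪ Fin n} {a : Fin r → ℤ}
variable {c W : ℕ}

lemma ofAdd_sum {ι : Type*} (F : Finset ι) (f : ι → (Fin n → ℤ)) :
    Multiplicative.ofAdd (∑ i ∈ F, f i) = ∏ i ∈ F, Multiplicative.ofAdd (f i) := by
  induction F using Finset.cons_induction with
  | empty => simp
  | cons j F hj ih => rw [Finset.sum_cons, Finset.prod_cons, ofAdd_add, ih]

/-- The coordinates of a word's product are bounded by `c` times its length. -/
lemma crd_word_bound (hc : ∀ s ∈ S, ∀ j, (crd bM s j).natAbs ≤ c)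
    {l : List (FreeAb n)} (hl : IsWord S l) (j : Fin n) :
    (crd bM l.prod j).natAbs ≤ c * l.length := by
  induction l with
  | nil => simp
  | cons s t ih =>
      have hs : (crd bM s j).natAbs ≤ c := by
        rcases hl s (List.mem_cons_self) with h | h
        · exact hc s h j
        · have := hc s⁻¹ h j
          rwa [crd_inv, Pi.neg_apply, Int.natAbs_neg] at this
      have ht := ih fun s' hs' => hl s' (List.mem_cons_of_mem s hs')
      rw [List.prod_cons, crd_mul]
      have := Int.natAbs_add_le (crd bM s j) (crd bM t.prod j)
      simp only [Pi.add_apply] at *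
      calc (crd bM s j + crd bM t.prod j).natAbs
          ≤ (crd bM s j).natAbs + (crd bM t.prod j).natAbs := Int.natAbs_add_le _ _
        _ ≤ c + c * t.length := Nat.add_le_add hs ht
        _ = c * (t.length + 1) := by ring
        _ = c * (s :: t).length := by rw [List.length_cons]

lemma crd_dist_bound (hc : ∀ s ∈ S, ∀ j, (crd bM s j).natAbs ≤ c)
    {x y : FreeAb n} {k : ℕ} (h : wordDist S x y ≤ (k : ℕ∞)) (j : Fin n) :
    (crd bM y j - crd bM x j).natAbs ≤ c * k := by
  obtain ⟨l, hl, he, hlen⟩ := exists_word_of_le h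
  have : crd bM y j - crd bM x j = crd bM l.prod j := by
    rw [he, crd_mul]; simp
  rw [this]
  exact le_trans (crd_word_bound hc hl j) (Nat.mul_le_mul_left c hlen)

/-- Points near `H` have small coordinates outside the range of `emb`. -/
lemma crd_le_of_setWordDist (hc : ∀ s ∈ S, ∀ j, (crd bM s j).natAbs ≤ c)
    (hHmem : ∀ x ∈ H, ∀ j, j ∉ Set.range emb → crd bM x j = 0)
    {x : FreeAb n} {L : ℕ} (hx : setWordDist S (H : Set (FreeAb n)) x ≤ (L : ℕ∞))
    {j : Fin n} (hj : j ∉ Set.range emb) :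
    (crd bM x j).natAbs ≤ c * L := by
  obtain ⟨h, hh, hd⟩ := exists_of_setWordDist_le hx
  have := crd_dist_bound hc hd j
  rwa [hHmem h hh j hj, sub_zero] at this

/-- The complement of the range of `emb`, as a finset. -/
def Jfin (emb : Fin r ↪ Fin n) : Finset (Fin n) := (Finset.univ.map emb)ᶜ

lemma mem_Jfin {j : Fin n} : j ∈ Jfin emb ↔ j ∉ Set.range emb := by
  simp [Jfin]

/-- Key upper bound: distance to `H` is controlled by the coordinates outside
the range of `emb`. -/
lemma slab (hW : ∀ j, wordDist S 1 (Multiplicative.ofAdd (bM j)) ≤ (W : ℕ∞))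
    (hHgen : ∀ q : Fin r → ℤ,
      Multiplicative.ofAdd (∑ i, (q i * a i) • bM (emb i)) ∈ H)
    {Amax : ℕ} (hA : ∀ i, (a i).natAbs ≤ Amax) (ha0 : ∀ i, a i ≠ 0) (x : FreeAb n) :
    setWordDist S (H : Set (FreeAb n)) x ≤
      ((((∑ j ∈ Jfin emb, (crd bM x j).natAbs) + r * Amax) * W : ℕ) : ℕ∞) := by
  classical
  set u : Fin n → ℤ := crd bM x with hu
  set q : Fin r → ℤ := fun i => u (emb i) / a i with hq
  set ρ : Fin r → ℤ := fun i => u (emb i) % a i with hρ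
  have hρA : ∀ i, (ρ i).natAbs ≤ Amax := by
    intro i
    have h0 : 0 ≤ ρ i := Int.emod_nonneg _ (ha0 i)
    have h2 : ρ i < ((a i).natAbs : ℤ) := Int.emod_lt _ (ha0 i)
    have h3 : (↑(a i).natAbs : ℤ) = |a i| := (Int.abs_eq_natAbs (a i)).symm
    have h4 := hA i
    omega
  -- the element of `H` used to approximate `x`
  have hdec : ∀ i, u (emb i) = q i * a i + ρ i := by
    intro i
    have h1 := Int.mul_ediv_add_emod (u (emb i)) (a i)
    have h2 : q i * a i = a i * (u (emb i) / a i) := by rw [hq]; ring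
    have h3 : ρ i = u (emb i) % a i := by rw [hρ]
    omega
  set h0 : FreeAb n := Multiplicative.ofAdd (∑ i, (q i * a i) • bM (emb i)) with hh0
  have hh : h0 ∈ H := hHgen q
  have hstep1 : setWordDist S (H : Set (FreeAb n)) x ≤ wordDist S h0 x :=
    setWordDist_le_wordDist hh
  have htrans : wordDist S h0 x = wordDist S 1 (h0⁻¹ * x) := by
    have := wordDist_mul_left (S := S) h0 1 (h0⁻¹ * x)
    rw [mul_one, mul_inv_cancel_left] at this
    exact this
  -- decompose h0⁻¹ * x
  have hxdec : h0⁻¹ * x =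
      Multiplicative.ofAdd (∑ j ∈ Jfin emb, u j • bM j) *
      Multiplicative.ofAdd (∑ i, ρ i • bM (emb i)) := by
    rw [← ofAdd_add]
    have hx2 : x = Multiplicative.ofAdd ((∑ i, u (emb i) • bM (emb i)) +
        ∑ j ∈ Jfin emb, u j • bM j) := by
      conv_lhs => rw [← pt_crd (bM := bM) x]
      rw [pt_eq_ofAdd_sum, ← hu]
      congr 1
      rw [← Finset.sum_add_sum_compl (Finset.univ.map emb) (fun j => u j • bM j)]
      congr 1
      rw [Finset.sum_map]
    rw [hx2, hh0, ← ofAdd_neg, ← ofAdd_add]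
    congr 1
    have hsplit : (∑ i, u (emb i) • bM (emb i)) =
        (∑ i, (q i * a i) • bM (emb i)) + ∑ i, ρ i • bM (emb i) := by
      rw [← Finset.sum_add_distrib]
      refine Finset.sum_congr rfl fun i _ => ?_
      rw [← add_smul, ← hdec i]
    rw [hsplit]
    abel
  -- bound the two factors
  have hb1 : wordDist S 1 (Multiplicative.ofAdd (∑ j ∈ Jfin emb, u j • bM j)) ≤
      (((∑ j ∈ Jfin emb, (u j).natAbs) * W : ℕ) : ℕ∞) := by
    rw [ofAdd_sum]
    refine le_trans (wordDist_one_prod (S := S) (Jfin emb)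
      (fun j => Multiplicative.ofAdd (u j • bM j)) (fun j => (u j).natAbs * W)
      (fun j _ => by rw [ofAdd_zsmul]; exact wordDist_one_zpow (hW j) (u j))) ?_
    apply Nat.cast_le.mpr
    rw [Finset.sum_mul]
  have hb2 : wordDist S 1 (Multiplicative.ofAdd (∑ i, ρ i • bM (emb i))) ≤
      ((r * (Amax * W) : ℕ) : ℕ∞) := by
    rw [ofAdd_sum]
    refine le_trans (wordDist_one_prod (S := S) Finset.univ
      (fun i => Multiplicative.ofAdd (ρ i • bM (emb i))) (fun _ => Amax * W)
      (fun i _ => by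
        rw [ofAdd_zsmul]
        exact le_trans (wordDist_one_zpow (hW (emb i)) (ρ i))
          (by exact_mod_cast Nat.mul_le_mul_right W (hρA i)))) ?_
    apply Nat.cast_le.mpr
    simp [Finset.sum_const, mul_assoc]
  have hfinal : wordDist S 1 (h0⁻¹ * x) ≤
      ((((∑ j ∈ Jfin emb, (u j).natAbs) * W) + r * (Amax * W) : ℕ) : ℕ∞) := by
    rw [hxdec]
    exact wordDist_one_mul_le hb1 hb2
  calc setWordDist S (H : Set (FreeAb n)) x ≤ wordDist S h0 x := hstep1
    _ = wordDist S 1 (h0⁻¹ * x) := htrans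
    _ ≤ _ := hfinal
    _ ≤ _ := by
        apply Nat.cast_le.mpr
        apply Nat.le_of_eq
        ring

end est

end ZnP

open Multiplicative

namespace ZnP

section paths2
variable {n : ℕ} {H : Subgroup (FreeAb n)} {S : Set (FreeAb n)}
variable {bM : Module.Basis (Fin n) ℤ (Fin n → ℤ)}
variable {r : ℕ} {emb : Fin r ↪ Fin n} {a : Fin r → ℤ}
variable {c W : ℕ}

lemma mem_K_of_big (hc : ∀ s ∈ S, ∀ j, (crd bM s j).natAbs ≤ c)
    (hHmem : ∀ x ∈ H, ∀ j, j ∉ Set.range emb → crd bM x j = 0)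
    {L : ℕ} {p : FreeAb n} {jw : Fin n} (hjw : jw ∉ Set.range emb)
    (hbig : c * L < (crd bM p jw).natAbs) :
    p ∈ (wordNbhd S (H : Set (FreeAb n)) L)ᶜ := by
  intro hmem
  have hle : setWordDist S (H : Set (FreeAb n)) p ≤ (L : ℕ∞) := hmem
  have := crd_le_of_setWordDist hc hHmem hle hjw
  omega

/-- Moving a single coordinate to a target value, staying far from `H`,
provided a coordinate outside the range of `emb` certifies safety throughout. -/
lemma seg_gen (hc : ∀ s ∈ S, ∀ j, (crd bM s j).natAbs ≤ c)
    (hW : ∀ j, wordDist S 1 (Multiplicative.ofAdd (bM j)) ≤ (W : ℕ∞))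
    (hHmem : ∀ x ∈ H, ∀ j, j ∉ Set.range emb → crd bM x j = 0)
    {L : ℕ} {j jw : Fin n} (hjw : jw ∉ Set.range emb) (v : ℤ) (u : Fin n → ℤ)
    (hsafe : ∀ t : ℤ, ((u j ≤ t ∧ t ≤ v) ∨ (v ≤ t ∧ t ≤ u j)) →
        ((c * L + c * W : ℕ) : ℤ) < |Function.update u j t jw|) :
    ConnectedInCayley S ((wordNbhd S (H : Set (FreeAb n)) L)ᶜ)
      (pt bM u) (pt bM (Function.update u j v)) := by
  have key : ∀ k : ℕ, ∀ u : Fin n → ℤ, (v - u j).natAbs = k →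
      (∀ t : ℤ, ((u j ≤ t ∧ t ≤ v) ∨ (v ≤ t ∧ t ≤ u j)) →
        ((c * L + c * W : ℕ) : ℤ) < |Function.update u j t jw|) →
      ConnectedInCayley S ((wordNbhd S (H : Set (FreeAb n)) L)ᶜ)
        (pt bM u) (pt bM (Function.update u j v)) := by
    intro k
    induction k with
    | zero =>
        intro u hk _
        have hv : v = u j := by omega
        rw [hv, Function.update_eq_self]
        exact Relation.ReflTransGen.refl
    | succ k ih =>
        intro u hk hsafe
        have hne : v ≠ u j := by
          intro h
          rw [h] at hk
          simp at hk
        set d : ℤ := if u j < v then 1 else -1 with hd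
        have hcase : (u j < v ∧ d = 1) ∨ (v < u j ∧ d = -1) := by
          rcases lt_trichotomy (u j) v with h | h | h
          · left; exact ⟨h, by rw [hd, if_pos h]⟩
          · exact absurd h.symm hne
          · right; exact ⟨h, by rw [hd, if_neg (by omega)]⟩
        set u' := Function.update u j (u j + d) with hu'
        have hu'j : u' j = u j + d := by rw [hu', Function.update_self]
        have hu'jw : u' jw = Function.update u j (u j + d) jw := rfl
        -- word realizing one unit step
        have hz : wordDist S 1 (Multiplicative.ofAdd (bM j) ^ d) ≤
            ((d.natAbs * W : ℕ) : ℕ∞) := wordDist_one_zpow (hW j) d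
        have hdabs : d.natAbs = 1 := by
          rcases hcase with ⟨_, h⟩ | ⟨_, h⟩ <;> simp [h]
        rw [hdabs, one_mul] at hz
        obtain ⟨l, hl, hlp, hllen⟩ := exists_word_of_le hz
        rw [one_mul] at hlp
        -- path from pt u to pt u'
        have hpath1 : ConnectedInCayley S ((wordNbhd S (H : Set (FreeAb n)) L)ᶜ)
            (pt bM u) (pt bM u * l.prod) := by
          apply connected_of_word hl
          intro t _
          apply mem_K_of_big hc hHmem hjw
          have hcp : crd bM (pt bM u * (l.take t).prod) jw =
              u jw + crd bM (l.take t).prod jw := by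
            rw [crd_mul]
            simp
          have hsmall : (crd bM (l.take t).prod jw).natAbs ≤ c * W :=
            le_trans
              (crd_word_bound hc (fun s hs => hl s (List.take_subset t l hs)) jw)
              (Nat.mul_le_mul_left c
                (le_trans (by rw [List.length_take]; exact min_le_right _ _) hllen))
          have hbase := hsafe (u j) (by rcases le_total (u j) v with h | h <;> omega)
          rw [Function.update_eq_self] at hbase
          have habs : |u jw| = ((u jw).natAbs : ℤ) := Int.abs_eq_natAbs _
          push_cast at hbase
          omega
        have hend1 : pt bM u * l.prod = pt bM u' := by
          rw [← hlp, ← ofAdd_zsmul, ← pt_update_add]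
        -- inductive path from pt u'
        have hk' : (v - u' j).natAbs = k := by
          rw [hu'j]
          rcases hcase with ⟨h, hd1⟩ | ⟨h, hd1⟩ <;> omega
        have hsafe' : ∀ t : ℤ, ((u' j ≤ t ∧ t ≤ v) ∨ (v ≤ t ∧ t ≤ u' j)) →
            ((c * L + c * W : ℕ) : ℤ) < |Function.update u' j t jw| := by
          intro t ht
          rw [hu', Function.update_idem]
          apply hsafe
          rw [hu'j] at ht
          rcases hcase with ⟨h, hd1⟩ | ⟨h, hd1⟩ <;> omega
        have hpath2 := ih u' hk' hsafe'
        rw [hu', Function.update_idem] at hpath2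
        rw [← hu'] at hpath2
        exact Relation.ReflTransGen.trans (hend1 ▸ hpath1) hpath2
  exact key (v - u j).natAbs u rfl hsafe

/-- Moving all coordinates in `F` to target values, keeping a fixed safe
coordinate `jw ∉ F`. -/
lemma segs (hc : ∀ s ∈ S, ∀ j, (crd bM s j).natAbs ≤ c)
    (hW : ∀ j, wordDist S 1 (Multiplicative.ofAdd (bM j)) ≤ (W : ℕ∞))
    (hHmem : ∀ x ∈ H, ∀ j, j ∉ Set.range emb → crd bM x j = 0)
    {L : ℕ} {jw : Fin n} (hjw : jw ∉ Set.range emb)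
    (target : Fin n → ℤ) (F : Finset (Fin n)) (hF : jw ∉ F) :
    ∀ u : Fin n → ℤ, ((c * L + c * W : ℕ) : ℤ) < |u jw| →
    ConnectedInCayley S ((wordNbhd S (H : Set (FreeAb n)) L)ᶜ)
      (pt bM u) (pt bM (fun j => if j ∈ F then target j else u j)) := by
  classical
  induction F using Finset.cons_induction with
  | empty =>
      intro u _
      have : (fun j => if j ∈ (∅ : Finset (Fin n)) then target j else u j) = u := by
        funext j'
        simp
      rw [this]
      exact Relation.ReflTransGen.refl
  | cons j F hjF ih =>
      intro u hu
      have hjwj : jw ≠ j := by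
        intro h
        exact hF (h ▸ Finset.mem_cons_self j F)
      have hjwF : jw ∉ F := fun h => hF (Finset.mem_cons_of_mem h)
      have hstep : ConnectedInCayley S ((wordNbhd S (H : Set (FreeAb n)) L)ᶜ)
          (pt bM u) (pt bM (Function.update u j (target j))) := by
        apply seg_gen hc hW hHmem hjw (target j) u
        intro t _
        rw [Function.update_of_ne hjwj]
        exact hu
      have hrest := ih hjwF (Function.update u j (target j))
        (by rw [Function.update_of_ne hjwj]; exact hu)
      have hfun : (fun j' => if j' ∈ F then target j'
            else Function.update u j (target j) j') =
          (fun j' => if j' ∈ Finset.cons j F hjF then target j' else u j') := by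
        funext j'
        by_cases h1 : j' ∈ F
        · simp [h1, Finset.mem_cons_of_mem h1]
        · by_cases h2 : j' = j
          · subst h2
            simp [h1, Finset.mem_cons_self]
          · simp [h1, h2, Function.update_of_ne h2, Finset.mem_cons]
      rw [hfun] at hrest
      exact Relation.ReflTransGen.trans hstep hrest

end paths2

end ZnP

open Multiplicative

namespace ZnP

section far
variable {n : ℕ} {H : Subgroup (FreeAb n)} {S : Set (FreeAb n)}
variable {bM : Module.Basis (Fin n) ℤ (Fin n → ℤ)}
variable {r : ℕ} {emb : Fin r ↪ Fin n} {a : Fin r → ℤ}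
variable {c W Amax : ℕ}

lemma exists_c (hfin : S.Finite) (bM : Module.Basis (Fin n) ℤ (Fin n → ℤ)) :
    ∃ c : ℕ, ∀ s ∈ S, ∀ j, (crd bM s j).natAbs ≤ c := by
  refine ⟨hfin.toFinset.sup (fun s => Finset.univ.sup fun j => (crd bM s j).natAbs),
    fun s hs j => ?_⟩
  have h1 : (crd bM s j).natAbs ≤ Finset.univ.sup fun j => (crd bM s j).natAbs :=
    Finset.le_sup (f := fun j => (crd bM s j).natAbs) (Finset.mem_univ j)
  have h2 : (Finset.univ.sup fun j => (crd bM s j).natAbs) ≤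
      hfin.toFinset.sup (fun s => Finset.univ.sup fun j => (crd bM s j).natAbs) :=
    Finset.le_sup (f := fun s => Finset.univ.sup fun j => (crd bM s j).natAbs)
      (hfin.mem_toFinset.mpr hs)
  exact le_trans h1 h2

lemma exists_W (hgen : Subgroup.closure S = ⊤) (bM : Module.Basis (Fin n) ℤ (Fin n → ℤ)) :
    ∃ W : ℕ, 0 < W ∧ ∀ j, wordDist S 1 (Multiplicative.ofAdd (bM j)) ≤ (W : ℕ∞) := by
  refine ⟨(Finset.univ.sup fun j =>
    (wordDist S 1 (Multiplicative.ofAdd (bM j))).toNat) + 1, Nat.succ_pos _, fun j => ?_⟩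
  have hne := wordDist_ne_top hgen (1 : FreeAb n) (Multiplicative.ofAdd (bM j))
  have := ENat.coe_toNat hne
  rw [← this]
  have h1 : (wordDist S 1 (Multiplicative.ofAdd (bM j))).toNat ≤
      Finset.univ.sup fun j => (wordDist S 1 (Multiplicative.ofAdd (bM j))).toNat :=
    Finset.le_sup (f := fun j => (wordDist S 1 (Multiplicative.ofAdd (bM j))).toNat)
      (Finset.mem_univ j)
  have h2 : (wordDist S 1 (Multiplicative.ofAdd (bM j))).toNat ≤
      (Finset.univ.sup fun j =>
        (wordDist S 1 (Multiplicative.ofAdd (bM j))).toNat) + 1 :=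
    le_trans h1 (Nat.le_succ _)
  exact_mod_cast h2

/-- Any point far enough from `H` is connected, outside the `L`-neighbourhood of `H`,
to a canonical far point (assuming corank at least 2). -/
lemma connect_far (hc : ∀ s ∈ S, ∀ j, (crd bM s j).natAbs ≤ c)
    (hW : ∀ j, wordDist S 1 (Multiplicative.ofAdd (bM j)) ≤ (W : ℕ∞)) (hW0 : 0 < W)
    (hHmem : ∀ x ∈ H, ∀ j, j ∉ Set.range emb → crd bM x j = 0)
    (hHgen : ∀ q : Fin r → ℤ,
      Multiplicative.ofAdd (∑ i, (q i * a i) • bM (emb i)) ∈ H)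
    (hA : ∀ i, (a i).natAbs ≤ Amax) (ha0 : ∀ i, a i ≠ 0)
    {L : ℕ} {j1 j2 : Fin n} (hj1 : j1 ∉ Set.range emb) (hj2 : j2 ∉ Set.range emb)
    (hj12 : j1 ≠ j2) {x : FreeAb n}
    (hx : ¬ setWordDist S (H : Set (FreeAb n)) x ≤
      (((n * (c * L + c * W + 1) + r * Amax) * W : ℕ) : ℕ∞)) :
    ConnectedInCayley S ((wordNbhd S (H : Set (FreeAb n)) L)ᶜ) x
      (pt bM (fun j => if j = j1 ∨ j = j2 then ((c * L + c * W + 1 : ℕ) : ℤ) else 0)) := by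
  classical
  set M : ℕ := c * L + c * W + 1 with hM
  set u := crd bM x with hu
  set Z : Fin n → ℤ := fun j => if j = j1 ∨ j = j2 then (M : ℤ) else 0 with hZ
  -- find a big coordinate jx outside the range of emb
  have hbig : ∃ jx ∈ Jfin emb, c * L + c * W < (u jx).natAbs := by
    by_contra hsmall
    push_neg at hsmall
    have hsum : ∑ j ∈ Jfin emb, (u j).natAbs ≤ (Jfin emb).card * (c * L + c * W) := by
      apply Finset.sum_le_card_nsmul
      intro j hj
      exact hsmall j hj
    have hcard : (Jfin emb).card ≤ n := le_trans (Finset.card_le_univ _) (by simp)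
    have hslab := slab (H := H) hW hHgen hA ha0 x
    apply hx
    refine le_trans hslab (Nat.cast_le.mpr ?_)
    have h1 : ∑ j ∈ Jfin emb, (crd bM x j).natAbs ≤ n * (c * L + c * W + 1) := by
      calc ∑ j ∈ Jfin emb, (crd bM x j).natAbs
          ≤ (Jfin emb).card * (c * L + c * W) := hsum
        _ ≤ n * (c * L + c * W + 1) := by
            exact le_trans (Nat.mul_le_mul_right _ hcard)
              (Nat.mul_le_mul_left n (Nat.le_succ _))
    exact Nat.mul_le_mul_right W (Nat.add_le_add_right h1 _)
  obtain ⟨jx, hjxJ, hjxbig⟩ := hbig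
  have hjx : jx ∉ Set.range emb := mem_Jfin.mp hjxJ
  set jw : Fin n := if jx = j1 then j2 else j1 with hjw
  have hjwr : jw ∉ Set.range emb := by
    rw [hjw]; split <;> assumption
  have hjwor : jw = j1 ∨ jw = j2 := by
    rw [hjw]; split
    · exact Or.inr rfl
    · exact Or.inl rfl
  have hjxjw : jx ≠ jw := by
    rw [hjw]; split
    · rename_i h; rw [h]; exact hj12
    · assumption
  -- step 1 : raise coordinate jw to M
  have habsx : ((c * L + c * W : ℕ) : ℤ) < |u jx| := by
    have : |u jx| = ((u jx).natAbs : ℤ) := Int.abs_eq_natAbs _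
    rw [this]
    exact_mod_cast hjxbig
  have hstep1 : ConnectedInCayley S ((wordNbhd S (H : Set (FreeAb n)) L)ᶜ)
      (pt bM u) (pt bM (Function.update u jw (M : ℤ))) := by
    apply seg_gen hc hW hHmem hjx ((M : ℕ) : ℤ) u
    intro t _
    rw [Function.update_of_ne hjxjw]
    exact habsx
  -- step 2 : move all other coordinates to Z
  set u1 := Function.update u jw (M : ℤ) with hu1
  have hu1jw : u1 jw = (M : ℤ) := by rw [hu1, Function.update_self]
  have hsafe1 : ((c * L + c * W : ℕ) : ℤ) < |u1 jw| := by
    rw [hu1jw]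
    have : |(M : ℤ)| = (M : ℤ) := abs_of_nonneg (by positivity)
    rw [this, hM]
    push_cast
    omega
  have hstep2 := segs (H := H) hc hW hHmem hjwr Z (Finset.univ.erase jw)
    (Finset.notMem_erase jw _) u1 hsafe1
  have hZend : (fun j => if j ∈ Finset.univ.erase jw then Z j else u1 j) = Z := by
    funext j'
    by_cases h : j' = jw
    · rw [if_neg (by rw [h]; exact Finset.notMem_erase _ _), h, hu1jw]
      rcases hjwor with h1 | h1 <;> simp [hZ, h1]
    · have : j' ∈ Finset.univ.erase jw := Finset.mem_erase.mpr ⟨h, Finset.mem_univ _⟩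
      rw [if_pos this]
  rw [hZend] at hstep2
  have hxu : x = pt bM u := (pt_crd x).symm
  rw [← hxu] at hstep1
  exact Relation.ReflTransGen.trans hstep1 hstep2

end far

end ZnP

open Multiplicative

namespace ZnP

section cases
variable {n : ℕ} {H : Subgroup (FreeAb n)} {S : Set (FreeAb n)}
variable {bM : Module.Basis (Fin n) ℤ (Fin n → ℤ)}
variable {r : ℕ} {emb : Fin r ↪ Fin n} {a : Fin r → ℤ}

/-- If `emb` covers everything (rank `n`), the subgroup is coarsely dense, so it
cannot coarsely separate. -/
lemma not_sep_top
    (hfin : S.Finite) (hgen : Subgroup.closure S = ⊤)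
    (hHgen : ∀ q : Fin r → ℤ,
      Multiplicative.ofAdd (∑ i, (q i * a i) • bM (emb i)) ∈ H)
    (ha0 : ∀ i, a i ≠ 0) (hr : r = n) :
    ¬ CoarselySeparates S (H : Set (FreeAb n)) := by
  classical
  rintro ⟨L, x, y, hx, hy, hnc, hdx, hdy⟩
  obtain ⟨W, hW0, hW⟩ := exists_W hgen bM
  set Amax := Finset.univ.sup fun i => (a i).natAbs with hAmax
  have hA : ∀ i, (a i).natAbs ≤ Amax := fun i =>
    Finset.le_sup (f := fun i => (a i).natAbs) (Finset.mem_univ i)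
  have hsurj : ∀ j, j ∈ Set.range emb := by
    have hbij : Function.Bijective emb :=
      (Fintype.bijective_iff_injective_and_card emb).mpr ⟨emb.injective, by simp [hr]⟩
    exact fun j => hbij.surjective j
  have hJ : Jfin emb = ∅ := by
    ext j
    simp [mem_Jfin, hsurj j]
  set B : ℕ := (0 + r * Amax) * W with hB
  obtain ⟨y', _, hyd⟩ := hdx B
  have hslab := slab (H := H) hW hHgen hA ha0 y'
  rw [hJ, Finset.sum_empty] at hslab
  exact absurd hslab (not_le.mpr hyd)

/-- If the corank is at least 2, the complement of a neighbourhood cannot have two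
deep components. -/
lemma not_sep_low
    (hfin : S.Finite) (hgen : Subgroup.closure S = ⊤)
    (hHmem : ∀ x ∈ H, ∀ j, j ∉ Set.range emb → crd bM x j = 0)
    (hHgen : ∀ q : Fin r → ℤ,
      Multiplicative.ofAdd (∑ i, (q i * a i) • bM (emb i)) ∈ H)
    (ha0 : ∀ i, a i ≠ 0) (hr : r + 2 ≤ n) :
    ¬ CoarselySeparates S (H : Set (FreeAb n)) := by
  classical
  rintro ⟨L, x, y, hx, hy, hnc, hdx, hdy⟩
  obtain ⟨c, hc⟩ := exists_c hfin bM
  obtain ⟨W, hW0, hW⟩ := exists_W hgen bM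
  set Amax := Finset.univ.sup fun i => (a i).natAbs with hAmax
  have hA : ∀ i, (a i).natAbs ≤ Amax := fun i =>
    Finset.le_sup (f := fun i => (a i).natAbs) (Finset.mem_univ i)
  -- two distinct elements outside the range of `emb`
  have hcard : 1 < (Jfin emb).card := by
    have : (Jfin emb).card = n - r := by
      rw [Jfin, Finset.card_compl, Finset.card_map]
      simp
    omega
  obtain ⟨j1, hj1, j2, hj2, hj12⟩ := Finset.one_lt_card.mp hcard
  rw [mem_Jfin] at hj1 hj2
  set D₁ : ℕ := (n * (c * L + c * W + 1) + r * Amax) * W with hD₁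
  obtain ⟨x', hxc, hxd⟩ := hdx D₁
  obtain ⟨y', hyc, hyd⟩ := hdy D₁
  have hx'far : ¬ setWordDist S (H : Set (FreeAb n)) x' ≤ (D₁ : ℕ∞) := not_le.mpr hxd
  have hy'far : ¬ setWordDist S (H : Set (FreeAb n)) y' ≤ (D₁ : ℕ∞) := not_le.mpr hyd
  have hcx := connect_far (H := H) hc hW hW0 hHmem hHgen hA ha0 hj1 hj2 hj12 hx'far
  have hcy := connect_far (H := H) hc hW hW0 hHmem hHgen hA ha0 hj1 hj2 hj12 hy'far
  exact hnc (Relation.ReflTransGen.trans hxc (Relation.ReflTransGen.trans hcx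
    (Relation.ReflTransGen.trans (connected_symm hcy) (connected_symm hyc))))

/-- If the corank is exactly 1, the subgroup coarsely separates. -/
lemma sep_of_corank_one
    (hfin : S.Finite) (hgen : Subgroup.closure S = ⊤)
    (hHmem : ∀ x ∈ H, ∀ j, j ∉ Set.range emb → crd bM x j = 0)
    (hHgen : ∀ q : Fin r → ℤ,
      Multiplicative.ofAdd (∑ i, (q i * a i) • bM (emb i)) ∈ H)
    (ha0 : ∀ i, a i ≠ 0) {j0 : Fin n} (hJ : Jfin emb = {j0}) :
    CoarselySeparates S (H : Set (FreeAb n)) := by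
  classical
  obtain ⟨c, hc⟩ := exists_c hfin bM
  obtain ⟨W, hW0, hW⟩ := exists_W hgen bM
  set Amax := Finset.univ.sup fun i => (a i).natAbs with hAmax
  have hA : ∀ i, (a i).natAbs ≤ Amax := fun i =>
    Finset.le_sup (f := fun i => (a i).natAbs) (Finset.mem_univ i)
  have hj0 : j0 ∉ Set.range emb :=
    mem_Jfin.mp (by rw [hJ]; exact Finset.mem_singleton_self j0)
  set L : ℕ := (c + r * Amax) * W with hL
  -- criterion for membership in the complement
  have hKcrit : ∀ p : FreeAb n, p ∈ (wordNbhd S (H : Set (FreeAb n)) L)ᶜ →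
      c < (crd bM p j0).natAbs := by
    intro p hp
    by_contra hle
    push_neg at hle
    apply hp
    show setWordDist S (H : Set (FreeAb n)) p ≤ (L : ℕ∞)
    have hslab := slab (H := H) hW hHgen hA ha0 p
    rw [hJ, Finset.sum_singleton] at hslab
    refine le_trans hslab (Nat.cast_le.mpr ?_)
    exact Nat.mul_le_mul_right W (Nat.add_le_add_right hle _)
  set T : ℕ := c * L + c * W + 1 with hT
  have hmemK : ∀ v : ℤ, (c : ℤ) * (L : ℤ) < |v| →
      pt bM (fun j => if j = j0 then v else 0) ∈ (wordNbhd S (H : Set (FreeAb n)) L)ᶜ := by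
    intro v hv
    apply mem_K_of_big hc hHmem hj0
    have hcv : crd bM (pt bM (fun j => if j = j0 then v else 0)) j0 = v := by
      rw [crd_pt]
      simp
    rw [hcv]
    have habs : |v| = (v.natAbs : ℤ) := Int.abs_eq_natAbs v
    have hcast : ((c * L : ℕ) : ℤ) = (c : ℤ) * (L : ℤ) := by push_cast; ring
    omega
  set xw := pt bM (fun j => if j = j0 then (-1 : ℤ) * (T : ℤ) else 0) with hxw
  set yw := pt bM (fun j => if j = j0 then (1 : ℤ) * (T : ℤ) else 0) with hyw
  have hTbig : (c : ℤ) * (L : ℤ) < (T : ℤ) := by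
    rw [hT]
    push_cast
    have : (0 : ℤ) ≤ (c : ℤ) * (W : ℤ) := by positivity
    omega
  have hxwK : xw ∈ (wordNbhd S (H : Set (FreeAb n)) L)ᶜ := by
    apply hmemK
    rw [neg_one_mul, abs_neg, abs_of_nonneg (by positivity)]
    exact hTbig
  have hywK : yw ∈ (wordNbhd S (H : Set (FreeAb n)) L)ᶜ := by
    apply hmemK
    rw [one_mul, abs_of_nonneg (by positivity)]
    exact hTbig
  -- deep components
  have hdeep : ∀ ε : ℤ, ε = 1 ∨ ε = -1 →
      DeepComponent S (H : Set (FreeAb n)) ((wordNbhd S (H : Set (FreeAb n)) L)ᶜ)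
        (pt bM (fun j => if j = j0 then ε * (T : ℤ) else 0)) := by
    intro ε hε D
    set m : ℕ := T + c * D + 1 with hm
    refine ⟨pt bM (fun j => if j = j0 then ε * (m : ℤ) else 0), ?_, ?_⟩
    · have hend : Function.update (fun j => if j = j0 then ε * (T : ℤ) else 0) j0
          (ε * (m : ℤ)) = (fun j => if j = j0 then ε * (m : ℤ) else 0) := by
        funext j'
        by_cases h : j' = j0
        · rw [h, Function.update_self, if_pos rfl]
        · rw [Function.update_of_ne h, if_neg h, if_neg h]
      have hseg := seg_gen (H := H) (L := L) (j := j0) hc hW hHmem hj0 (ε * (m : ℤ))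
        (fun j => if j = j0 then ε * (T : ℤ) else 0) ?_
      · rw [hend] at hseg
        exact hseg
      · intro t ht
        rw [Function.update_self]
        have hmeq : ((m : ℕ) : ℤ) = (T : ℤ) + (c : ℤ) * (D : ℤ) + 1 := by
          rw [hm]; push_cast; ring
        have hcast : ((c * L + c * W : ℕ) : ℤ) = (c : ℤ) * (L : ℤ) + (c : ℤ) * (W : ℤ) := by
          push_cast; ring
        have hTeq : (T : ℤ) = (c : ℤ) * (L : ℤ) + (c : ℤ) * (W : ℤ) + 1 := by
          rw [hT]; push_cast; ring
        rcases hε with h1 | h1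
        · subst h1
          have ht' : ((T : ℤ) ≤ t ∧ t ≤ (m : ℤ)) ∨ ((m : ℤ) ≤ t ∧ t ≤ (T : ℤ)) := by
            simpa using ht
          rcases ht' with ⟨ht1, ht2⟩ | ⟨ht1, ht2⟩ <;>
          · have htpos : (0 : ℤ) < t := by omega
            rw [abs_of_pos htpos]
            omega
        · subst h1
          have ht' : (-(T : ℤ) ≤ t ∧ t ≤ -(m : ℤ)) ∨ (-(m : ℤ) ≤ t ∧ t ≤ -(T : ℤ)) := by
            simpa using ht
          rcases ht' with ⟨ht1, ht2⟩ | ⟨ht1, ht2⟩ <;>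
          · have htneg : t < 0 := by omega
            rw [abs_of_neg htneg]
            omega
    · rw [lt_iff_not_ge]
      intro hled
      have := crd_le_of_setWordDist hc hHmem hled hj0
      have hcv : crd bM (pt bM (fun j => if j = j0 then ε * (m : ℤ) else 0)) j0 =
          ε * (m : ℤ) := by
        rw [crd_pt]
        simp
      rw [hcv] at this
      have hna : (ε * (m : ℤ)).natAbs = m := by
        rcases hε with h1 | h1 <;> subst h1 <;> simp
      rw [hna] at this
      omega
  -- not connected
  have hnc : ¬ ConnectedInCayley S ((wordNbhd S (H : Set (FreeAb n)) L)ᶜ) xw yw := by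
    intro hconn
    have hsign : ∀ q, ConnectedInCayley S ((wordNbhd S (H : Set (FreeAb n)) L)ᶜ) xw q →
        crd bM q j0 < 0 := by
      intro q hq
      induction hq with
      | refl =>
          rw [hxw, crd_pt]
          simp only [if_pos rfl, neg_one_mul, Left.neg_neg_iff]
          rw [hT]
          push_cast
          omega
      | tail hab hbc ih =>
          obtain ⟨hbK, hcK, s, hsS, rfl⟩ := hbc
          have hbig := hKcrit _ hbK
          have hstep : (crd bM s j0).natAbs ≤ c := by
            rcases hsS with h | h
            · exact hc s h j0
            · have := hc s⁻¹ h j0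
              rwa [crd_inv, Pi.neg_apply, Int.natAbs_neg] at this
          rw [crd_mul, Pi.add_apply]
          omega
    have hpos := hsign yw hconn
    rw [hyw, crd_pt] at hpos
    simp only [if_pos rfl, one_mul] at hpos
    omega
  exact ⟨L, xw, yw, hxwK, hywK, hnc, hdeep (-1) (Or.inr rfl), hdeep 1 (Or.inl rfl)⟩

end cases

end ZnP

open Multiplicative

namespace ZnP

section rank
variable {n : ℕ}

/-- A subgroup of `FreeAb n` is isomorphic to the multiplicative version of its
additive avatar. -/
def mulEquivSubN (H : Subgroup (FreeAb n)) : H ≃* Multiplicative (subN H) where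
  toFun x := Multiplicative.ofAdd (⟨Multiplicative.toAdd (x : FreeAb n), by
    show Multiplicative.ofAdd (Multiplicative.toAdd (x : FreeAb n)) ∈ H
    rw [ofAdd_toAdd]
    exact x.2⟩ : subN H)
  invFun v := ⟨Multiplicative.ofAdd ((Multiplicative.toAdd v : subN H) : Fin n → ℤ),
    (Multiplicative.toAdd v).2⟩
  left_inv x := rfl
  right_inv v := rfl
  map_mul' x y := rfl

/-- A basis of the additive avatar gives an isomorphism with a standard free
abelian group. -/
noncomputable def isoH {H : Subgroup (FreeAb n)} {m : ℕ}
    (bN : Module.Basis (Fin m) ℤ (subN H)) : H ≃* FreeAb m :=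
  (mulEquivSubN H).trans (AddEquiv.toMultiplicative bN.equivFun.toAddEquiv)

lemma rank_unique {H : Subgroup (FreeAb n)} {m1 m2 : ℕ} (e : H ≃* FreeAb m1)
    (bN : Module.Basis (Fin m2) ℤ (subN H)) : m1 = m2 := by
  have e2 : FreeAb m1 ≃* FreeAb m2 := e.symm.trans (isoH bN)
  have e3 : (Fin m1 → ℤ) ≃+ (Fin m2 → ℤ) := MulEquiv.toAdditive e2
  have e4 := e3.toIntLinearEquiv (modM := inferInstance) (modM₂ := inferInstance)
  have h := e4.finrank_eq
  simpa [Module.finrank_fin_fun] using h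

end rank

end ZnP

open ZnP Multiplicative in
/-- For `n ≥ 1`, a subgroup `H` of `ℤ^n` (with a word metric coming
from a finite generating set) is coarsely separating if and only if `H` has rank
`n - 1`. -/
theorem subgroup_of_Zn_coarselySeparates_iff_rank {n : ℕ} (hn : 1 ≤ n)
    (H : Subgroup (FreeAb n)) (S : Set (FreeAb n)) (hS : IsFinGenSet S) :
    CoarselySeparates S (H : Set (FreeAb n)) ↔ Nonempty (H ≃* FreeAb (n - 1)) := by
  classical
  obtain ⟨hfin, hgen⟩ := hS
  obtain ⟨r, snf⟩ := (subN H).smithNormalForm (Pi.basisFun ℤ (Fin n))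
  have ha0 : ∀ i, snf.a i ≠ 0 := by
    intro i h
    have hsnfi := snf.snf i
    rw [h, zero_smul] at hsnfi
    exact Module.Basis.ne_zero snf.bN i (ZeroMemClass.coe_eq_zero.mp hsnfi)
  have hrn : r ≤ n := by simpa using Fintype.card_le_of_embedding snf.f
  have hHmem : ∀ x ∈ H, ∀ j, j ∉ Set.range snf.f → crd snf.bM x j = 0 := by
    intro x hx j hj
    have hxN : Multiplicative.toAdd x ∈ subN H := by
      show Multiplicative.ofAdd (Multiplicative.toAdd x) ∈ H
      rwa [ofAdd_toAdd]
    have h := snf.repr_eq_zero_of_notMem_range (⟨Multiplicative.toAdd x, hxN⟩ : subN H) hj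
    unfold crd
    rw [Module.Basis.equivFun_apply]
    exact h
  have hHgen : ∀ q : Fin r → ℤ,
      Multiplicative.ofAdd (∑ i, (q i * snf.a i) • snf.bM (snf.f i)) ∈ H := by
    intro q
    have hz := (∑ i, q i • snf.bN i : subN H).2
    have hcoe : ((∑ i, q i • snf.bN i : subN H) : Fin n → ℤ) =
        ∑ i, (q i * snf.a i) • snf.bM (snf.f i) := by
      rw [Submodule.coe_sum]
      refine Finset.sum_congr rfl fun i _ => ?_
      rw [Submodule.coe_smul, snf.snf i, smul_smul]
    rw [mem_subN, hcoe] at hz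
    exact hz
  rcases lt_trichotomy r (n - 1) with hlt | heq | hgt
  · -- corank at least 2 : both sides false
    refine iff_of_false (not_sep_low hfin hgen hHmem hHgen ha0 (by omega)) ?_
    rintro ⟨e⟩
    have := rank_unique e snf.bN
    omega
  · -- corank exactly 1 : both sides true
    have hJcard : (Jfin snf.f).card = 1 := by
      rw [Jfin, Finset.card_compl, Finset.card_map]
      simp
      omega
    obtain ⟨j0, hj0⟩ := Finset.card_eq_one.mp hJcard
    exact iff_of_true (sep_of_corank_one hfin hgen hHmem hHgen ha0 hj0)
      ⟨isoH (snf.bN.reindex (finCongr heq))⟩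
  · -- full rank : both sides false
    have hr : r = n := by omega
    refine iff_of_false (not_sep_top hfin hgen hHgen ha0 hr) ?_
    rintro ⟨e⟩
    have := rank_unique e snf.bN
    omega
end CoarseGraph
end

section
/- Let n ≥ 1 be an integer and H ≤ ℤ^n a subgroup of rank n−1. Then H is coarsely separating in ℤ^n: some metric neighbourhood of H (with respect to a word metric on ℤ^n) has at least two connected components containing points arbitrarily far away from H. -/
/-! ## Coarse geometry of graphs -/

section CoarseGraph

variable {W : Type*}

section WordLemmas

variable {G : Type*} [Group G] {S : Set G}

lemma enat_sInf_mem {s : Set ℕ∞} (hs : s.Nonempty) : sInf s ∈ s := by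
  obtain ⟨m, hm, hmin⟩ := (IsWellFounded.wf (r := ((· < ·) : ℕ∞ → ℕ∞ → Prop))).has_min s hs
  have : sInf s = m := le_antisymm (sInf_le hm) (le_sInf fun x hx => not_lt.mp (hmin x hx))
  rw [this]; exact hm

lemma exists_word (hS : Subgroup.closure S = ⊤) (g : G) :
    ∃ l : List G, (∀ s ∈ l, s ∈ S ∨ s⁻¹ ∈ S) ∧ g = l.prod := by
  have hg : g ∈ Subgroup.closure S := hS ▸ Subgroup.mem_top g
  induction hg using Subgroup.closure_induction with
  | mem s hs => exact ⟨[s], by simp [hs], by simp⟩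
  | one => exact ⟨[], by simp, by simp⟩
  | mul x y hx hy ihx ihy =>
    obtain ⟨l1, h1, rfl⟩ := ihx
    obtain ⟨l2, h2, rfl⟩ := ihy
    refine ⟨l1 ++ l2, ?_, by simp⟩
    intro s hs
    rcases List.mem_append.mp hs with h | h
    exacts [h1 s h, h2 s h]
  | inv x hx ihx =>
    obtain ⟨l, hl, rfl⟩ := ihx
    refine ⟨(l.map (fun u => u⁻¹)).reverse, ?_, List.prod_inv_reverse l⟩
    intro s hs
    rw [List.mem_reverse, List.mem_map] at hs
    obtain ⟨t, ht, rfl⟩ := hs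
    rcases hl t ht with h | h
    · right; simpa using h
    · left; exact h

lemma wordDist_le {a : G} (l : List G) (hl : ∀ s ∈ l, s ∈ S ∨ s⁻¹ ∈ S) :
    wordDist S a (a * l.prod) ≤ (l.length : ℕ∞) :=
  sInf_le ⟨l, hl, rfl, rfl⟩

lemma exists_of_wordDist_le {a x : G} {L : ℕ} (h : wordDist S a x ≤ (L : ℕ∞)) :
    ∃ l : List G, (∀ s ∈ l, s ∈ S ∨ s⁻¹ ∈ S) ∧ x = a * l.prod ∧ l.length ≤ L := by
  set s : Set ℕ∞ :=
    {n : ℕ∞ | ∃ l : List G, (∀ s ∈ l, s ∈ S ∨ s⁻¹ ∈ S) ∧ x = a * l.prod ∧ n = l.length} with hs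
  rcases Set.eq_empty_or_nonempty s with he | hne
  · exfalso
    have : wordDist S a x = ⊤ := by rw [wordDist, ← hs, he, sInf_empty]
    rw [this] at h
    exact absurd (top_le_iff.mp h).symm (by simp)
  · have hmem := enat_sInf_mem hne
    obtain ⟨l, hl, hx, hlen⟩ := hmem
    refine ⟨l, hl, hx, ?_⟩
    have : (l.length : ℕ∞) ≤ (L : ℕ∞) := by rw [← hlen]; exact h
    exact_mod_cast this

lemma setWordDist_le_of {A : Set G} {a x : G} (ha : a ∈ A) :
    setWordDist S A x ≤ wordDist S a x := biInf_le _ ha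

lemma exists_of_setWordDist_le {A : Set G} {x : G} {L : ℕ}
    (h : setWordDist S A x ≤ (L : ℕ∞)) : ∃ a ∈ A, wordDist S a x ≤ (L : ℕ∞) := by
  by_contra hc
  push_neg at hc
  have h2 : ((L + 1 : ℕ) : ℕ∞) ≤ setWordDist S A x := by
    refine le_iInf₂ fun a ha => ?_
    have := hc a ha
    have hL : ((L + 1 : ℕ) : ℕ∞) = (L : ℕ∞) + 1 := by push_cast; rfl
    rw [hL]
    exact Order.add_one_le_of_lt this
  have := h2.trans h
  have : L + 1 ≤ L := by exact_mod_cast this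
  omega

lemma lt_setWordDist {A : Set G} {x : G} {D : ℕ}
    (h : ∀ a ∈ A, ∀ l : List G, (∀ s ∈ l, s ∈ S ∨ s⁻¹ ∈ S) → x = a * l.prod → D < l.length) :
    (D : ℕ∞) < setWordDist S A x := by
  have h2 : ((D + 1 : ℕ) : ℕ∞) ≤ setWordDist S A x := by
    refine le_iInf₂ fun a ha => le_sInf fun n hn => ?_
    obtain ⟨l, hl, hx, rfl⟩ := hn
    exact_mod_cast h a ha l hl hx
  refine lt_of_lt_of_le ?_ h2
  exact_mod_cast Nat.lt_succ_self D

variable (φ : G → ℤ) (hφ : ∀ a b : G, φ (a * b) = φ a + φ b)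

include hφ

lemma phi_one : φ 1 = 0 := by have := hφ 1 1; simp at this; omega

lemma abs_phi_word {C : ℤ} (hC : ∀ s : G, (s ∈ S ∨ s⁻¹ ∈ S) → |φ s| ≤ C) :
    ∀ l : List G, (∀ s ∈ l, s ∈ S ∨ s⁻¹ ∈ S) → |φ l.prod| ≤ C * l.length := by
  intro l
  induction l with
  | nil => intro _; simp [phi_one φ hφ]
  | cons s t ih =>
    intro h
    have h1 : |φ s| ≤ C := hC s (h s List.mem_cons_self)
    have h2 : |φ t.prod| ≤ C * t.length := ih fun u hu => h u (List.mem_cons_of_mem _ hu)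
    have h3 : φ ((s :: t).prod) = φ s + φ t.prod := by rw [List.prod_cons]; exact hφ _ _
    calc |φ (s :: t).prod| ≤ |φ s| + |φ t.prod| := by rw [h3]; exact abs_add_le _ _
      _ ≤ C + C * t.length := add_le_add h1 h2
      _ = C * (s :: t).length := by simp; push_cast; ring

lemma lt_setWordDist_of_abs {A : Set G} (hA : ∀ a ∈ A, φ a = 0) {C : ℤ} (hC0 : 0 ≤ C)
    (hC : ∀ s : G, (s ∈ S ∨ s⁻¹ ∈ S) → |φ s| ≤ C) {x : G} {D : ℕ}
    (h : C * D < |φ x|) : (D : ℕ∞) < setWordDist S A x := by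
  refine lt_setWordDist fun a ha l hl hx => ?_
  by_contra hlen
  push_neg at hlen
  have h1 : φ x = φ l.prod := by rw [hx, hφ, hA a ha, zero_add]
  have h2 : |φ l.prod| ≤ C * l.length := abs_phi_word φ hφ hC l hl
  have h3 : (l.length : ℤ) ≤ (D : ℤ) := by exact_mod_cast hlen
  have h4 : C * l.length ≤ C * D := mul_le_mul_of_nonneg_left h3 hC0
  rw [h1] at h
  omega

omit hφ

lemma conn_of_prefixes {K : Set G} :
    ∀ (l : List G) (x : G), (∀ s ∈ l, s ∈ S ∨ s⁻¹ ∈ S) →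
      (∀ k, k ≤ l.length → x * (l.take k).prod ∈ K) →
      ConnectedInCayley S K x (x * l.prod) := by
  intro l
  induction l with
  | nil => intro x _ _; rw [List.prod_nil, mul_one]; exact Relation.ReflTransGen.refl
  | cons s t ih =>
    intro x h hk
    have h0 : x ∈ K := by simpa using hk 0 (by simp)
    have h1 : x * s ∈ K := by simpa using hk 1 (by simp)
    have step : ConnectedInCayley S K x (x * s) :=
      Relation.ReflTransGen.single ⟨h0, h1, s, h s List.mem_cons_self, rfl⟩
    have tail : ConnectedInCayley S K (x * s) (x * s * t.prod) := by
      refine ih (x * s) (fun u hu => h u (List.mem_cons_of_mem _ hu)) fun k hk' => ?_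
      have := hk (k + 1) (by simpa using Nat.succ_le_succ hk')
      simpa [List.take_succ_cons, mul_assoc] using this
    have : ConnectedInCayley S K x (x * s * t.prod) := step.trans tail
    simpa [List.prod_cons, mul_assoc] using this

end WordLemmas

section Master

variable {G : Type*} [CommGroup G] {S : Set G} {H : Subgroup G}
  (φ : G → ℤ) (C L : ℕ) (zm : G) (lz : List G)

lemma phi_pow (hφ : ∀ a b : G, φ (a * b) = φ a + φ b) (g : G) :
    ∀ m : ℕ, φ (g ^ m) = m * φ g := by
  intro m
  induction m with
  | zero => simpa using phi_one φ hφ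
  | succ k ih => rw [pow_succ, hφ, ih]; push_cast; ring

variable (hφ : ∀ a b : G, φ (a * b) = φ a + φ b)
  (hC : ∀ s : G, (s ∈ S ∨ s⁻¹ ∈ S) → |φ s| ≤ (C : ℤ))
  (hH : ∀ a ∈ H, φ a = 0)
  (hslab : ∀ w : G, |φ w| ≤ (C : ℤ) → w ∈ wordNbhd S (H : Set G) L)
  (hz : φ zm = 1)
  (hlz : ∀ s ∈ lz, s ∈ S ∨ s⁻¹ ∈ S) (hlzp : zm = lz.prod)

include hφ hH hC

lemma master_inK {w : G} (h : (C : ℤ) * L < |φ w|) : w ∈ (wordNbhd S (H : Set G) L)ᶜ := by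
  intro hw
  have h2 : (L : ℕ∞) < setWordDist S (H : Set G) w :=
    lt_setWordDist_of_abs φ hφ hH (by positivity) hC h
  exact absurd hw (by simpa [wordNbhd] using not_le.mpr h2)

include hslab

lemma master_signpos {x y : G}
    (hconn : ConnectedInCayley S ((wordNbhd S (H : Set G) L)ᶜ) x y)
    (hx : (C : ℤ) < φ x) : (C : ℤ) < φ y := by
  induction hconn with
  | refl => exact hx
  | @tail b c h1 h2 ih =>
    obtain ⟨hbK, hcK, s, hs, rfl⟩ := h2
    have habs : (C : ℤ) < |φ (b * s)| := by
      by_contra hc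
      push_neg at hc
      exact hcK (hslab _ hc)
    obtain ⟨hs1, hs2⟩ := abs_le.mp (hC s hs)
    have hsum : φ (b * s) = φ b + φ s := hφ b s
    rw [hsum] at habs ⊢
    rcases abs_cases (φ b + φ s) with ⟨he, _⟩ | ⟨he, _⟩ <;> rw [he] at habs <;> omega

include hz hlz hlzp

lemma master_conn {m m' : ℕ} (hm : C * L + C * lz.length + C + 1 ≤ m) (hmm : m ≤ m') :
    ConnectedInCayley S ((wordNbhd S (H : Set G) L)ᶜ) (zm ^ m) (zm ^ m') := by
  induction m' with
  | zero =>
    have : m = 0 := Nat.le_zero.mp hmm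
    rw [this]
    exact Relation.ReflTransGen.refl
  | succ k ih =>
    rcases Nat.lt_or_ge m (k + 1) with hlt | hge
    · have hmk : m ≤ k := Nat.lt_succ_iff.mp hlt
      have step : ConnectedInCayley S ((wordNbhd S (H : Set G) L)ᶜ) (zm ^ k) (zm ^ (k + 1)) := by
        have hcp := conn_of_prefixes (S := S) (K := (wordNbhd S (H : Set G) L)ᶜ) lz (zm ^ k)
          hlz ?_
        · rw [← hlzp, ← pow_succ] at hcp
          exact hcp
        · intro j hj
          refine master_inK φ C L hφ hC hH ?_
          have h1 : φ (zm ^ k * (lz.take j).prod) = (k : ℤ) + φ ((lz.take j).prod) := by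
            rw [hφ, phi_pow φ hφ, hz, mul_one]
          have h2 : |φ ((lz.take j).prod)| ≤ (C : ℤ) * (lz.take j).length :=
            abs_phi_word φ hφ hC _ (fun u hu => hlz u (List.mem_of_mem_take hu))
          have h3 : ((lz.take j).length : ℤ) ≤ (lz.length : ℤ) := by
            have : (lz.take j).length ≤ lz.length := by
              simp [List.length_take]
            exact_mod_cast this
          have h4 : (C : ℤ) * (lz.take j).length ≤ (C : ℤ) * lz.length :=
            mul_le_mul_of_nonneg_left h3 (by positivity)
          have hk : (C * L + C * lz.length + C + 1 : ℤ) ≤ (k : ℤ) := by exact_mod_cast hm.trans hmk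
          have : (C : ℤ) * L < φ (zm ^ k * (lz.take j).prod) := by
            rw [h1]
            push_cast at hk ⊢
            rcases abs_cases (φ ((lz.take j).prod)) with ⟨he, _⟩ | ⟨he, _⟩ <;> omega
          calc ((C : ℤ) * L) < φ (zm ^ k * (lz.take j).prod) := this
            _ ≤ |φ (zm ^ k * (lz.take j).prod)| := le_abs_self _
      exact (ih hmk).trans step
    · have : m = k + 1 := le_antisymm hmm hge
      rw [this]
      exact Relation.ReflTransGen.refl

lemma master_deep :
    DeepComponent S (H : Set G) ((wordNbhd S (H : Set G) L)ᶜ)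
      (zm ^ (C * L + C * lz.length + C + 1)) := by
  intro D
  refine ⟨zm ^ (max (C * L + C * lz.length + C + 1) (C * D + 1)), ?_, ?_⟩
  · exact master_conn φ C L zm lz hφ hC hH hslab hz hlz hlzp le_rfl (le_max_left _ _)
  · refine lt_setWordDist_of_abs φ hφ hH (by positivity) hC ?_
    rw [phi_pow φ hφ, hz, mul_one]
    have h1 : C * D + 1 ≤ max (C * L + C * lz.length + C + 1) (C * D + 1) := le_max_right _ _
    have : (C * D + 1 : ℤ) ≤ (max (C * L + C * lz.length + C + 1) (C * D + 1) : ℤ) := by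
      exact_mod_cast h1
    rcases abs_cases ((max (C * L + C * lz.length + C + 1) (C * D + 1) : ℤ)) with ⟨he, _⟩ | ⟨he, _⟩ <;>
      push_cast at this ⊢ <;> omega

end Master

section Alg

lemma lemA {n : ℕ} (hn : 1 ≤ n) (N : Submodule ℤ (Fin n → ℤ))
    (e : N ≃ₗ[ℤ] (Fin (n - 1) → ℤ)) :
    ∃ (f : (Fin n → ℤ) →ₗ[ℤ] ℤ) (z : Fin n → ℤ), f z = 1 ∧ (∀ a ∈ N, f a = 0) ∧
      ∀ c : ℤ, ∃ T : Finset (Fin n → ℤ), ∀ x : Fin n → ℤ, f x = c → ∃ t ∈ T, x - t ∈ N := by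
  classical
  obtain ⟨m, snf⟩ := N.smithNormalForm (Pi.basisFun ℤ (Fin n))
  have hm : m = n - 1 := by
    have h1 : Module.finrank ℤ N = m := by
      rw [Module.finrank_eq_card_basis snf.bN]; simp
    have h2 : Module.finrank ℤ N = n - 1 := by
      rw [e.finrank_eq, Module.finrank_pi]; simp
    omega
  -- an index outside the range of the embedding
  have hjex : ∃ j : Fin n, j ∉ Set.range snf.f := by
    by_contra hc
    push_neg at hc
    have hsurj : Function.Surjective snf.f := fun j => hc j
    have := Fintype.card_le_of_surjective snf.f hsurj
    simp at this
    omega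
  obtain ⟨j, hj⟩ := hjex
  -- covering of indices
  have hcov : ∀ k : Fin n, k = j ∨ ∃ i, snf.f i = k := by
    have hne : j ∉ Finset.univ.map snf.f := by
      simp only [Finset.mem_map, Finset.mem_univ, true_and]
      intro ⟨i, hi⟩
      exact hj ⟨i, hi⟩
    have hcard : (insert j (Finset.univ.map snf.f)).card = n := by
      rw [Finset.card_insert_of_notMem hne, Finset.card_map, Finset.card_univ]
      simp [hm]
      omega
    have huniv : insert j (Finset.univ.map snf.f) = Finset.univ := by
      apply Finset.eq_univ_of_card
      simpa using hcard
    intro k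
    have : k ∈ insert j (Finset.univ.map snf.f) := huniv ▸ Finset.mem_univ k
    rcases Finset.mem_insert.mp this with h | h
    · exact Or.inl h
    · right
      obtain ⟨i, _, hi⟩ := Finset.mem_map.mp h
      exact ⟨i, hi⟩
  have ha_ne : ∀ i : Fin m, snf.a i ≠ 0 := by
    intro i hai
    have h0 : ((snf.bN i : (Fin n → ℤ))) = 0 := by rw [snf.snf i, hai, zero_smul]
    have : (snf.bN i : (Fin n → ℤ)) ≠ 0 := by
      simpa [Submodule.coe_eq_zero] using snf.bN.ne_zero i
    exact this h0
  refine ⟨snf.bM.coord j, snf.bM j, by simp, ?_, ?_⟩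
  · intro v hv
    exact snf.le_ker_coord_of_notMem_range hj hv
  · intro c
    set B : ℤ := |c| + ∑ i : Fin m, |snf.a i| with hB
    refine ⟨(Fintype.piFinset fun _ : Fin n => Finset.Icc (-B) B).image snf.bM.equivFun.symm,
      ?_⟩
    intro x hx
    set q : Fin m → ℤ := fun i => snf.bM.repr x (snf.f i) / snf.a i with hq
    set h : Fin n → ℤ := ∑ i : Fin m, q i • ((snf.bN i : (Fin n → ℤ))) with hh
    have hhN : h ∈ N := Submodule.sum_mem _ fun i _ => Submodule.smul_mem _ _ (snf.bN i).2
    refine ⟨x - h, ?_, by simpa using hhN⟩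
    -- coordinates of h
    have hrep : ∀ k : Fin n, snf.bM.repr h k =
        ∑ i : Fin m, if snf.f i = k then q i * snf.a i else 0 := by
      intro k
      rw [hh, map_sum, Finsupp.finset_sum_apply]
      refine Finset.sum_congr rfl fun i _ => ?_
      rw [map_smul, snf.snf i, map_smul, Module.Basis.repr_self]
      simp [Finsupp.single_apply]
      ring_nf
      by_cases hik : snf.f i = k <;> simp [hik]
    have hbound : ∀ k : Fin n, snf.bM.repr (x - h) k ∈ Finset.Icc (-B) B := by
      intro k
      rcases hcov k with rfl | ⟨i, rfl⟩
      · have hhk : snf.bM.repr h k = 0 := by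
          rw [hrep]
          refine Finset.sum_eq_zero fun i _ => ?_
          have : snf.f i ≠ k := fun hfi => hj ⟨i, hfi⟩
          simp [this]
        have hxk : snf.bM.repr x k = c := hx
        rw [map_sub, Finsupp.sub_apply, hhk, hxk, sub_zero]
        have h1 : (0 : ℤ) ≤ ∑ i : Fin m, |snf.a i| :=
          Finset.sum_nonneg fun i _ => abs_nonneg _
        simp only [Finset.mem_Icc, hB]
        constructor <;> rcases abs_cases c with ⟨he, _⟩ | ⟨he, _⟩ <;> omega
      · have hhk : snf.bM.repr h (snf.f i) = q i * snf.a i := by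
          rw [hrep]
          have heq : ∀ i' : Fin m, (snf.f i' = snf.f i) ↔ i' = i :=
            fun i' => snf.f.injective.eq_iff
          simp only [heq]
          simp [Finset.sum_ite_eq']
        have hxk : snf.bM.repr (x - h) (snf.f i) = snf.bM.repr x (snf.f i) % snf.a i := by
          rw [map_sub, Finsupp.sub_apply, hhk, hq]
          rw [Int.emod_def]
          ring
        rw [hxk]
        have h1 : 0 ≤ snf.bM.repr x (snf.f i) % snf.a i := Int.emod_nonneg _ (ha_ne i)
        have h2 : snf.bM.repr x (snf.f i) % snf.a i < |snf.a i| := Int.emod_lt_abs _ (ha_ne i)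
        have h3 : |snf.a i| ≤ ∑ i' : Fin m, |snf.a i'| :=
          Finset.single_le_sum (f := fun i' => |snf.a i'|) (fun i' _ => abs_nonneg _)
            (Finset.mem_univ i)
        have h4 : (0:ℤ) ≤ |c| := abs_nonneg c
        simp only [Finset.mem_Icc, hB]
        omega
    refine Finset.mem_image.mpr ⟨snf.bM.equivFun (x - h), ?_, ?_⟩
    · refine Fintype.mem_piFinset.mpr fun k => ?_
      simpa [Module.Basis.equivFun_apply] using hbound k
    · exact snf.bM.equivFun.symm_apply_apply _

end Alg


/-- For `n ≥ 1`, every subgroup `H ≤ ℤ^n` of rank `n - 1` is coarsely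
separating in `ℤ^n`: the complement of some metric neighbourhood of `H` has at least two
connected components containing points arbitrarily far away from `H`. -/
theorem subgroup_of_Zn_coarselySeparates_of_rank_sub_one {n : ℕ} (hn : 1 ≤ n)
    (H : Subgroup (FreeAb n)) (hrk : Nonempty (H ≃* FreeAb (n - 1)))
    (S : Set (FreeAb n)) (hS : IsFinGenSet S) :
    CoarselySeparates S (H : Set (FreeAb n)) := by
  classical
  obtain ⟨hSfin, hSgen⟩ := hS
  set N : Submodule ℤ (Fin n → ℤ) :=
    AddSubgroup.toIntSubmodule (Subgroup.toAddSubgroup' H) with hNdef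
  have hNmem : ∀ x : Fin n → ℤ, x ∈ N ↔ Multiplicative.ofAdd x ∈ H := fun x => Iff.rfl
  obtain ⟨e0⟩ := hrk
  -- a linear equivalence N ≃ ℤ^(n-1)
  let eAdd : N ≃+ (Fin (n - 1) → ℤ) :=
  { toFun := fun p => Multiplicative.toAdd (e0 ⟨Multiplicative.ofAdd p.1, (hNmem _).mp p.2⟩)
    invFun := fun v => ⟨Multiplicative.toAdd
      ((e0.symm (Multiplicative.ofAdd v) : H) : FreeAb n), by
        rw [hNmem]
        simp⟩
    left_inv := by
      intro p
      ext
      simp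
    right_inv := by
      intro v
      simp
    map_add' := by
      intro p q
      have : (⟨Multiplicative.ofAdd (p.1 + q.1), (hNmem _).mp (p + q).2⟩ : H) =
          ⟨Multiplicative.ofAdd p.1, (hNmem _).mp p.2⟩ *
            ⟨Multiplicative.ofAdd q.1, (hNmem _).mp q.2⟩ := by
        ext
        simp [ofAdd_add]
      simp only [Submodule.coe_add] at *
      rw [this, map_mul, toAdd_mul] }
  obtain ⟨f, z, hz1, hfN, hcover⟩ := lemA hn N eAdd.toIntLinearEquiv
  set φ : FreeAb n → ℤ := fun w => f (Multiplicative.toAdd w) with hφdef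
  have hφ : ∀ a b : FreeAb n, φ (a * b) = φ a + φ b := by
    intro a b; simp [hφdef, toAdd_mul]
  have hH : ∀ a ∈ H, φ a = 0 := by
    intro a ha
    refine hfN _ ((hNmem _).mpr ?_)
    simpa using ha
  -- the negated functional
  set φ' : FreeAb n → ℤ := fun w => -φ w with hφ'def
  have hφ' : ∀ a b : FreeAb n, φ' (a * b) = φ' a + φ' b := by
    intro a b; simp [hφ'def, hφ a b]; ring
  have hH' : ∀ a ∈ H, φ' a = 0 := by
    intro a ha; simp [hφ'def, hH a ha]
  -- the constant C
  set Cn : ℕ := 1 + hSfin.toFinset.sup (fun s => (φ s).natAbs) with hCdef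
  have hCS : ∀ s ∈ S, |φ s| ≤ (Cn : ℤ) := by
    intro s hs
    have h1 : (φ s).natAbs ≤ hSfin.toFinset.sup (fun s => (φ s).natAbs) :=
      Finset.le_sup (f := fun s => (φ s).natAbs) (hSfin.mem_toFinset.mpr hs)
    have h2 : (φ s).natAbs ≤ Cn := by
      rw [hCdef]
      omega
    rw [Int.abs_eq_natAbs]
    exact_mod_cast h2
  have hphiinv : ∀ s : FreeAb n, φ s⁻¹ = -φ s := by
    intro s
    have h1 : φ (s * s⁻¹) = φ s + φ s⁻¹ := hφ s s⁻¹
    rw [mul_inv_cancel] at h1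
    have h0 : φ 1 = 0 := phi_one φ hφ
    omega
  have hC : ∀ s : FreeAb n, (s ∈ S ∨ s⁻¹ ∈ S) → |φ s| ≤ (Cn : ℤ) := by
    intro s hs
    rcases hs with hs | hs
    · exact hCS s hs
    · have := hCS _ hs
      rw [hphiinv s] at this
      simpa using this
  have hC' : ∀ s : FreeAb n, (s ∈ S ∨ s⁻¹ ∈ S) → |φ' s| ≤ (Cn : ℤ) := by
    intro s hs; simpa [hφ'def] using hC s hs
  -- word-producing function
  have hwl := fun g : FreeAb n => (exists_word hSgen g).choose_spec
  set wl : FreeAb n → List (FreeAb n) := fun g => (exists_word hSgen g).choose with hwldef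
  -- the neighbourhood radius L
  have hTC := fun c : ℤ => (hcover c).choose_spec
  set TC : ℤ → Finset (Fin n → ℤ) := fun c => (hcover c).choose with hTCdef
  set L : ℕ := (Finset.Icc (-(Cn : ℤ)) (Cn : ℤ)).sup
    (fun c => (TC c).sup fun t => (wl (Multiplicative.ofAdd t)).length) with hLdef
  have hslab : ∀ w : FreeAb n, |φ w| ≤ (Cn : ℤ) → w ∈ wordNbhd S (H : Set (FreeAb n)) L := by
    intro w hw
    obtain ⟨t, htT, htN⟩ := hTC (φ w) (Multiplicative.toAdd w) rfl
    have hmemH : Multiplicative.ofAdd (Multiplicative.toAdd w - t) ∈ H := (hNmem _).mp htN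
    have hwg : w = Multiplicative.ofAdd (Multiplicative.toAdd w - t) *
        (wl (Multiplicative.ofAdd t)).prod := by
      rw [← (hwl (Multiplicative.ofAdd t)).2, ← ofAdd_add]
      simp
    have hd : wordDist S (Multiplicative.ofAdd (Multiplicative.toAdd w - t)) w ≤
        ((wl (Multiplicative.ofAdd t)).length : ℕ∞) := by
      have h0 := wordDist_le (S := S) (a := Multiplicative.ofAdd (Multiplicative.toAdd w - t))
        (wl (Multiplicative.ofAdd t)) (hwl (Multiplicative.ofAdd t)).1
      rw [← hwg] at h0
      exact h0
    have hlen : (wl (Multiplicative.ofAdd t)).length ≤ L := by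
      refine le_trans
        (Finset.le_sup (f := fun t => (wl (Multiplicative.ofAdd t)).length) htT) ?_
      refine Finset.le_sup (f := fun c => (TC c).sup fun t => (wl (Multiplicative.ofAdd t)).length) ?_
      rw [Finset.mem_Icc]
      constructor
      · linarith [abs_le.mp hw |>.1]
      · linarith [abs_le.mp hw |>.2]
    have : setWordDist S (H : Set (FreeAb n)) w ≤ (L : ℕ∞) := by
      refine le_trans (setWordDist_le_of hmemH) (le_trans hd ?_)
      exact_mod_cast hlen
    exact this
  have hslab' : ∀ w : FreeAb n, |φ' w| ≤ (Cn : ℤ) → w ∈ wordNbhd S (H : Set (FreeAb n)) L := by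
    intro w hw; exact hslab w (by simpa [hφ'def] using hw)
  -- the element z
  set zm : FreeAb n := Multiplicative.ofAdd z with hzmdef
  have hz : φ zm = 1 := by simp [hφdef, hzmdef, hz1]
  have hz' : φ' zm⁻¹ = 1 := by
    rw [hφ'def]
    simp [hphiinv, hz]
  set lz : List (FreeAb n) := wl zm with hlzdef
  set lz' : List (FreeAb n) := wl zm⁻¹ with hlz'def
  set Mx : ℕ := Cn * L + Cn * lz.length + Cn + 1 with hMxdef
  set My : ℕ := Cn * L + Cn * lz'.length + Cn + 1 with hMydef
  have hφx : φ (zm ^ Mx) = (Mx : ℤ) := by rw [phi_pow φ hφ, hz, mul_one]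
  have hφ'y : φ' (zm⁻¹ ^ My) = (My : ℤ) := by rw [phi_pow φ' hφ', hz', mul_one]
  have hφy : φ (zm⁻¹ ^ My) = -(My : ℤ) := by
    have h0 : -φ (zm⁻¹ ^ My) = (My : ℤ) := hφ'y
    linarith
  have hCL1 : Cn * L + 1 ≤ Mx := by
    rw [hMxdef]
    exact Nat.succ_le_succ (le_trans (Nat.le_add_right _ _) (Nat.le_add_right _ _))
  have hCL1' : Cn * L + 1 ≤ My := by
    rw [hMydef]
    exact Nat.succ_le_succ (le_trans (Nat.le_add_right _ _) (Nat.le_add_right _ _))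
  have hCnM : Cn + 1 ≤ Mx := by
    rw [hMxdef]
    exact Nat.succ_le_succ (Nat.le_add_left _ _)
  refine ⟨L, zm ^ Mx, zm⁻¹ ^ My, ?_, ?_, ?_, ?_, ?_⟩
  · refine master_inK φ Cn L hφ hC hH ?_
    rw [hφx, abs_of_nonneg (Nat.cast_nonneg _)]
    exact_mod_cast Nat.lt_of_succ_le hCL1
  · refine master_inK φ' Cn L hφ' hC' hH' ?_
    rw [hφ'y, abs_of_nonneg (Nat.cast_nonneg _)]
    exact_mod_cast Nat.lt_of_succ_le hCL1'
  · intro hconn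
    have hbig : (Cn : ℤ) < φ (zm ^ Mx) := by
      rw [hφx]
      exact_mod_cast Nat.lt_of_succ_le hCnM
    have := master_signpos φ Cn L hφ hC hH hslab hconn hbig
    rw [hφy] at this
    have hMy0 : (0 : ℤ) ≤ (My : ℤ) := Nat.cast_nonneg _
    have hCn0 : (0 : ℤ) ≤ (Cn : ℤ) := Nat.cast_nonneg _
    linarith
  · exact master_deep φ Cn L zm lz hφ hC hH hslab hz (hwl zm).1 (hwl zm).2
  · exact master_deep φ' Cn L zm⁻¹ lz' hφ' hC' hH' hslab' hz' (hwl zm⁻¹).1 (hwl zm⁻¹).2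
end CoarseGraph
end

section
/- Let n ≥ 1 be an integer and Y a subset of ℤ^n contained in ℤ^{n−1} × {0}. If Y coarsely separates ℤ^n (with respect to a word metric on ℤ^n), then Y is quasi-dense in ℤ^{n−1} × {0}, i.e. there exists R ≥ 0 such that every point of ℤ^{n−1} × {0} is at distance at most R from Y. -/
/-! ## Coarse geometry of graphs -/

section CoarseGraph

variable {W : Type*}

namespace QD13

open Multiplicative Finset

variable {n : ℕ}

/-- The ℓ¹ norm on `Fin n → ℤ`, valued in `ℕ`. -/
def l1 (v : Fin n → ℤ) : ℕ := ∑ i, (v i).natAbs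

lemma l1_eq (v : Fin n → ℤ) (i : Fin n) :
    l1 v = (v i).natAbs + ∑ j ∈ Finset.univ.erase i, (v j).natAbs :=
  (Finset.add_sum_erase _ _ (Finset.mem_univ i)).symm

lemma l1_neg (v : Fin n → ℤ) : l1 (-v) = l1 v := by simp [l1]

lemma l1_add_le (v w : Fin n → ℤ) : l1 (v + w) ≤ l1 v + l1 w := by
  simp only [l1, ← Finset.sum_add_distrib]
  exact Finset.sum_le_sum fun i _ => Int.natAbs_add_le _ _

lemma l1_eq_zero {v : Fin n → ℤ} (h : l1 v = 0) : v = 0 := by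
  funext i
  rw [l1, Finset.sum_eq_zero_iff] at h
  simpa [Int.natAbs_eq_zero] using h i (Finset.mem_univ i)

lemma l1_single (i : Fin n) {ε : ℤ} (hε : ε = 1 ∨ ε = -1) :
    l1 (Pi.single i ε) = 1 := by
  rw [l1_eq _ i]
  have h2 : ∀ j ∈ Finset.univ.erase i, ((Pi.single i ε : Fin n → ℤ) j).natAbs = 0 := by
    intro j hj
    rw [Pi.single_eq_of_ne (Finset.ne_of_mem_erase hj)]
    rfl
  rw [Finset.sum_congr rfl h2, Pi.single_eq_same]
  rcases hε with rfl | rfl <;> simp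

section Group

variable {S Y : Set (FreeAb n)} {C1 C2 L : ℕ}

lemma wordDist_le_length {x y : FreeAb n} {l : List (FreeAb n)}
    (hl : ∀ s ∈ l, s ∈ S ∨ s⁻¹ ∈ S) (hy : y = x * l.prod) :
    wordDist S x y ≤ (l.length : ℕ∞) :=
  sInf_le ⟨l, hl, hy, rfl⟩

lemma exists_list_of_wordDist_le {x y : FreeAb n} {k : ℕ} (h : wordDist S x y ≤ (k : ℕ∞)) :
    ∃ l : List (FreeAb n), (∀ s ∈ l, s ∈ S ∨ s⁻¹ ∈ S) ∧ y = x * l.prod ∧ l.length ≤ k := by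
  by_contra hc
  push_neg at hc
  have h1 : ((k : ℕ∞) + 1) ≤ wordDist S x y := by
    apply le_sInf
    rintro m ⟨l, hl, hy, rfl⟩
    have hlen := hc l hl hy
    have : (k + 1 : ℕ) ≤ l.length := hlen
    exact_mod_cast this
  have h2 := h1.trans h
  have : (k + 1 : ℕ∞) ≤ (k : ℕ∞) := by exact_mod_cast h2
  have : (k + 1 : ℕ) ≤ k := by exact_mod_cast this
  omega

lemma exists_close_of_setWordDist_le {r : FreeAb n} {k : ℕ}
    (h : setWordDist S Y r ≤ (k : ℕ∞)) :
    ∃ y ∈ Y, wordDist S y r ≤ (k : ℕ∞) := by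
  by_contra hc
  push_neg at hc
  have h1 : ((k : ℕ∞) + 1) ≤ setWordDist S Y r := by
    apply le_iInf₂
    intro y hy
    have := hc y hy
    exact Order.add_one_le_of_lt this
  have h2 := h1.trans h
  have : (k + 1 : ℕ∞) ≤ (k : ℕ∞) := by exact_mod_cast h2
  have : (k + 1 : ℕ) ≤ k := by exact_mod_cast this
  omega

lemma mem_compl_nbhd
    (hC1 : ∀ l : List (FreeAb n), (∀ s ∈ l, s ∈ S ∨ s⁻¹ ∈ S) →
      l1 (Multiplicative.toAdd l.prod) ≤ C1 * l.length)
    {r : FreeAb n}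
    (h : ∀ y ∈ Y, C1 * L < l1 (Multiplicative.toAdd r - Multiplicative.toAdd y)) :
    r ∈ (wordNbhd S Y L)ᶜ := by
  intro hr
  obtain ⟨y, hy, hw⟩ := exists_close_of_setWordDist_le hr
  obtain ⟨l, hl, hprod, hlen⟩ := exists_list_of_wordDist_le hw
  have h2 : l1 (Multiplicative.toAdd l.prod) ≤ C1 * l.length := hC1 l hl
  have h3 : Multiplicative.toAdd r - Multiplicative.toAdd y = Multiplicative.toAdd l.prod := by
    rw [hprod, toAdd_mul]; abel
  have h4 := h y hy
  rw [h3] at h4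
  have h5 : C1 * l.length ≤ C1 * L := Nat.mul_le_mul_left _ hlen
  omega

lemma pathOfList {K : Set (FreeAb n)} :
    ∀ (l : List (FreeAb n)) (p : FreeAb n), (∀ s ∈ l, s ∈ S ∨ s⁻¹ ∈ S) →
      (∀ j, j ≤ l.length → p * (l.take j).prod ∈ K) →
      ConnectedInCayley S K p (p * l.prod)
  | [], p, _, _ => by rw [List.prod_nil, mul_one]; exact Relation.ReflTransGen.refl
  | s :: l, p, hv, hK => by
    have hpK : p ∈ K := by simpa using hK 0 (by simp)
    have hpsK : p * s ∈ K := by simpa using hK 1 (by simp)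
    have hstep : ConnectedInCayley S K p (p * s) :=
      Relation.ReflTransGen.single ⟨hpK, hpsK, s, hv s (List.mem_cons_self), rfl⟩
    have ih := pathOfList l (p * s) (fun t ht => hv t (List.mem_cons_of_mem _ ht))
      (fun j hj => by
        have := hK (j + 1) (by simpa using hj)
        simpa [List.take_succ_cons, mul_assoc] using this)
    have : ConnectedInCayley S K p (p * s * l.prod) := hstep.trans ih
    simpa [List.prod_cons, mul_assoc] using this

lemma stepB
    (hC1 : ∀ l : List (FreeAb n), (∀ s ∈ l, s ∈ S ∨ s⁻¹ ∈ S) →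
      l1 (Multiplicative.toAdd l.prod) ≤ C1 * l.length)
    (hC2 : ∀ g : FreeAb n, ∃ l : List (FreeAb n), (∀ s ∈ l, s ∈ S ∨ s⁻¹ ∈ S) ∧
      l.prod = g ∧ l.length ≤ C2 * l1 (Multiplicative.toAdd g))
    {p p' : FreeAb n}
    (hstep : l1 (Multiplicative.toAdd p' - Multiplicative.toAdd p) ≤ 1)
    (hp : ∀ y ∈ Y, C1 * L + C1 * C2 + 1 ≤
      l1 (Multiplicative.toAdd p - Multiplicative.toAdd y)) :
    ConnectedInCayley S (wordNbhd S Y L)ᶜ p p' := by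
  obtain ⟨l, hl, hprod, hlen⟩ := hC2 (p⁻¹ * p')
  have hg : l1 (Multiplicative.toAdd (p⁻¹ * p')) =
      l1 (Multiplicative.toAdd p' - Multiplicative.toAdd p) := by
    rw [toAdd_mul, toAdd_inv, sub_eq_neg_add]
  have hlen' : l.length ≤ C2 := by
    rw [hg] at hlen
    calc l.length ≤ C2 * l1 (Multiplicative.toAdd p' - Multiplicative.toAdd p) := hlen
    _ ≤ C2 * 1 := Nat.mul_le_mul_left _ hstep
    _ = C2 := Nat.mul_one _
  have hmem : ∀ j, j ≤ l.length → p * (l.take j).prod ∈ (wordNbhd S Y L)ᶜ := by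
    intro j hj
    apply mem_compl_nbhd hC1
    intro y hy
    have htakev : ∀ s ∈ l.take j, s ∈ S ∨ s⁻¹ ∈ S := fun s hs => hl s (List.mem_of_mem_take hs)
    have htake : l1 (Multiplicative.toAdd (l.take j).prod) ≤ C1 * C2 := by
      calc l1 (Multiplicative.toAdd (l.take j).prod) ≤ C1 * (l.take j).length := hC1 _ htakev
      _ ≤ C1 * C2 := Nat.mul_le_mul_left _ (le_trans (by simpa using List.length_take_le j l) hlen')
    have tri : l1 (Multiplicative.toAdd p - Multiplicative.toAdd y) ≤
        l1 (Multiplicative.toAdd (p * (l.take j).prod) - Multiplicative.toAdd y) +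
        l1 (Multiplicative.toAdd (l.take j).prod) := by
      have heq : Multiplicative.toAdd p - Multiplicative.toAdd y =
          (Multiplicative.toAdd (p * (l.take j).prod) - Multiplicative.toAdd y) +
          -(Multiplicative.toAdd (l.take j).prod) := by
        rw [toAdd_mul]; abel
      rw [heq]
      exact le_trans (l1_add_le _ _) (by rw [l1_neg])
    have hpy := hp y hy
    omega
  have hpath := pathOfList l p hl hmem
  rwa [hprod, mul_inv_cancel_left] at hpath

lemma boxPath
    (hC1 : ∀ l : List (FreeAb n), (∀ s ∈ l, s ∈ S ∨ s⁻¹ ∈ S) →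
      l1 (Multiplicative.toAdd l.prod) ≤ C1 * l.length)
    (hC2 : ∀ g : FreeAb n, ∃ l : List (FreeAb n), (∀ s ∈ l, s ∈ S ∨ s⁻¹ ∈ S) ∧
      l.prod = g ∧ l.length ≤ C2 * l1 (Multiplicative.toAdd g)) :
    ∀ (k : ℕ) (a b : Fin n → ℤ), l1 (b - a) = k →
      (∀ r : Fin n → ℤ, (∀ i, min (a i) (b i) ≤ r i ∧ r i ≤ max (a i) (b i)) →
        ∀ y ∈ Y, C1 * L + C1 * C2 + 1 ≤ l1 (r - Multiplicative.toAdd y)) →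
      ConnectedInCayley S (wordNbhd S Y L)ᶜ (Multiplicative.ofAdd a) (Multiplicative.ofAdd b) := by
  intro k
  induction k with
  | zero =>
    intro a b hk _
    have hba : b - a = 0 := l1_eq_zero hk
    have : b = a := by
      funext i; have := congrFun hba i; simpa [sub_eq_zero] using this
    rw [this]
    exact Relation.ReflTransGen.refl
  | succ k ih =>
    intro a b hk hbox
    have hne : ∃ i, a i ≠ b i := by
      by_contra hc
      push_neg at hc
      have : b - a = 0 := funext fun i => by simp [hc i]
      rw [this] at hk
      simp [l1] at hk
    obtain ⟨i, hi⟩ := hne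
    have hvi : (b - a) i ≠ 0 := by
      intro h
      apply hi
      have h2 : b i - a i = 0 := h
      omega
    set ε : ℤ := if a i < b i then 1 else -1 with hε
    set a' := Function.update a i (a i + ε) with ha'
    -- a' - a = Pi.single i ε
    have hdiff : a' - a = Pi.single i ε := by
      funext j
      by_cases hj : j = i
      · subst hj; simp [ha']
      · simp [ha', Function.update_of_ne hj, Pi.single_eq_of_ne hj]
    have hsub : b - a' = Function.update (b - a) i (b i - a i - ε) := by
      funext j
      by_cases hj : j = i
      · subst hj; simp [ha']; ring
      · simp [ha', Function.update_of_ne hj]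
    have hk' : l1 (b - a') = k := by
      rw [hsub, l1_eq _ i, Function.update_self]
      have hoff : ∀ j ∈ Finset.univ.erase i,
          ((Function.update (b - a) i (b i - a i - ε)) j).natAbs = ((b - a) j).natAbs := by
        intro j hj
        rw [Function.update_of_ne (Finset.ne_of_mem_erase hj)]
      rw [Finset.sum_congr rfl hoff]
      have hl1 := l1_eq (b - a) i
      rw [hk] at hl1
      have hbai : (b - a) i = b i - a i := rfl
      rw [hbai] at hl1
      have : (b i - a i - ε).natAbs + 1 = (b i - a i).natAbs := by
        rw [hε]
        have : b i - a i ≠ 0 := by rw [hbai] at hvi; exact hvi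
        split_ifs with hlt <;> omega
      omega
    have ha'box : ∀ j, min (a j) (b j) ≤ a' j ∧ a' j ≤ max (a j) (b j) := by
      intro j
      by_cases hj : j = i
      · subst hj
        rw [ha', Function.update_self, hε]
        split_ifs with hlt <;> constructor <;> omega
      · rw [ha', Function.update_of_ne hj]
        constructor <;> omega
    have hboxsub : ∀ r : Fin n → ℤ,
        (∀ j, min (a' j) (b j) ≤ r j ∧ r j ≤ max (a' j) (b j)) →
        (∀ j, min (a j) (b j) ≤ r j ∧ r j ≤ max (a j) (b j)) := by
      intro r hr j
      have h1 := hr j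
      have h2 := ha'box j
      constructor <;> omega
    have hstep : ConnectedInCayley S (wordNbhd S Y L)ᶜ
        (Multiplicative.ofAdd a) (Multiplicative.ofAdd a') := by
      apply stepB hC1 hC2
      · show l1 (Multiplicative.toAdd (Multiplicative.ofAdd a') -
          Multiplicative.toAdd (Multiplicative.ofAdd a)) ≤ 1
        rw [toAdd_ofAdd, toAdd_ofAdd, hdiff, l1_single i]
        rw [hε]; split_ifs <;> simp
      · intro y hy
        apply hbox a _ y hy
        intro j; constructor
        · exact min_le_left _ _
        · exact le_max_left _ _
    exact hstep.trans (ih a' b hk' (fun r hr => hbox r (hboxsub r hr)))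

lemma conn_symm {K : Set (FreeAb n)} {u v : FreeAb n}
    (h : ConnectedInCayley S K u v) : ConnectedInCayley S K v u := by
  induction h with
  | refl => exact Relation.ReflTransGen.refl
  | tail _ hstep ih =>
    obtain ⟨hb, hc, s, hs, rfl⟩ := hstep
    refine Relation.ReflTransGen.head ⟨hc, hb, s⁻¹, ?_, by group⟩ ih
    rcases hs with hs | hs
    · right; simpa using hs
    · left; exact hs

end Group

end QD13
/-- Let `n ≥ 1` and let `Y ⊆ ℤ^n` be contained in `ℤ^{n-1} × {0}`
(the last coordinate vanishes on `Y`). If `Y` coarsely separates `ℤ^n` (for a word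
metric on `ℤ^n`), then `Y` is quasi-dense in `ℤ^{n-1} × {0}`: there is `R ≥ 0` such that
every point of `ℤ^{n-1} × {0}` is at distance at most `R` from `Y`. -/
theorem quasiDense_of_coarselySeparates_in_hyperplane {n : ℕ} (hn : 1 ≤ n)
    (Y : Set (FreeAb n))
    (hY : ∀ y ∈ Y, Multiplicative.toAdd y (⟨n - 1, by omega⟩ : Fin n) = 0)
    (S : Set (FreeAb n)) (hS : IsFinGenSet S)
    (hsep : CoarselySeparates S Y) :
    ∃ R : ℕ, ∀ z : FreeAb n, Multiplicative.toAdd z (⟨n - 1, by omega⟩ : Fin n) = 0 →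
      setWordDist S Y z ≤ (R : ℕ∞) := by
  by_contra hcon
  push_neg at hcon
  obtain ⟨L, x, y, hxmem, hymem, hnc, hdx, hdy⟩ := hsep
  obtain ⟨Sfin, Sgen⟩ := hS
  set idx : Fin n := ⟨n - 1, by omega⟩ with hidx
  -- the constant C1 : word length controls l1 norm
  set C1 : ℕ := Sfin.toFinset.sup (fun s => QD13.l1 (Multiplicative.toAdd s)) with hC1def
  have hmemC1 : ∀ s : FreeAb n, (s ∈ S ∨ s⁻¹ ∈ S) → QD13.l1 (Multiplicative.toAdd s) ≤ C1 := by
    rintro s (hs | hs)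
    · exact Finset.le_sup (f := fun s => QD13.l1 (Multiplicative.toAdd s))
        (Sfin.mem_toFinset.mpr hs)
    · have h1 := Finset.le_sup (f := fun s => QD13.l1 (Multiplicative.toAdd s))
        (Sfin.mem_toFinset.mpr hs)
    
      have h2 : QD13.l1 (Multiplicative.toAdd s) = QD13.l1 (Multiplicative.toAdd s⁻¹) := by
        rw [toAdd_inv, QD13.l1_neg]
      rw [h2]; exact h1
  have hC1 : ∀ l : List (FreeAb n), (∀ s ∈ l, s ∈ S ∨ s⁻¹ ∈ S) →
      QD13.l1 (Multiplicative.toAdd l.prod) ≤ C1 * l.length := by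
    intro l
    induction l with
    | nil => intro _; simp [QD13.l1]
    | cons s l ih =>
      intro hv
      have h1 := hmemC1 s (hv s (List.mem_cons_self))
      have h2 := ih (fun t ht => hv t (List.mem_cons_of_mem _ ht))
      have h3 : Multiplicative.toAdd (s :: l).prod
          = Multiplicative.toAdd s + Multiplicative.toAdd l.prod := by
        rw [List.prod_cons, toAdd_mul]
      rw [h3]
      calc QD13.l1 (Multiplicative.toAdd s + Multiplicative.toAdd l.prod)
          ≤ QD13.l1 (Multiplicative.toAdd s) + QD13.l1 (Multiplicative.toAdd l.prod) :=
            QD13.l1_add_le _ _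
        _ ≤ C1 + C1 * l.length := Nat.add_le_add h1 h2
        _ = C1 * (s :: l).length := by rw [List.length_cons, Nat.mul_succ]; omega
  -- every element admits a word
  have hword : ∀ g : FreeAb n, ∃ l : List (FreeAb n),
      (∀ s ∈ l, s ∈ S ∨ s⁻¹ ∈ S) ∧ l.prod = g := by
    intro g
    have hg : g ∈ Subgroup.closure S := by rw [Sgen]; trivial
    induction hg using Subgroup.closure_induction with
    | mem x hx => exact ⟨[x], by simpa using Or.inl hx, by simp⟩
    | one => exact ⟨[], by simp, by simp⟩
    | mul x y' hx hy ihx ihy =>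
      obtain ⟨lx, hlx, hpx⟩ := ihx
      obtain ⟨ly, hly, hpy⟩ := ihy
      refine ⟨lx ++ ly, ?_, by rw [List.prod_append, hpx, hpy]⟩
      intro s hs
      rcases List.mem_append.mp hs with h | h
      · exact hlx s h
      · exact hly s h
    | inv x hx ihx =>
      obtain ⟨lx, hlx, hpx⟩ := ihx
      refine ⟨(lx.map (fun t => t⁻¹)).reverse, ?_, ?_⟩
      · intro s hs
        rw [List.mem_reverse, List.mem_map] at hs
        obtain ⟨t, ht, rfl⟩ := hs
        rcases hlx t ht with h | h
        · right; simpa using h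
        · left; exact h
      · rw [← hpx, ← List.prod_inv_reverse]
  -- words for the standard basis vectors
  choose w hwv hwp using fun i : Fin n =>
    hword (Multiplicative.ofAdd (Pi.single i 1))
  set C2 : ℕ := (Finset.univ.sup fun i : Fin n => (w i).length) + 1 with hC2def
  have hwlen : ∀ i, (w i).length ≤ C2 := by
    intro i
    have h1 : (w i).length ≤ Finset.univ.sup fun i : Fin n => (w i).length :=
      Finset.le_sup (f := fun i : Fin n => (w i).length) (Finset.mem_univ i)
    omega
  have hC2 : ∀ g : FreeAb n, ∃ l : List (FreeAb n), (∀ s ∈ l, s ∈ S ∨ s⁻¹ ∈ S) ∧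
      l.prod = g ∧ l.length ≤ C2 * QD13.l1 (Multiplicative.toAdd g) := by
    suffices h : ∀ (k : ℕ) (g : FreeAb n), QD13.l1 (Multiplicative.toAdd g) ≤ k →
        ∃ l : List (FreeAb n), (∀ s ∈ l, s ∈ S ∨ s⁻¹ ∈ S) ∧
        l.prod = g ∧ l.length ≤ C2 * QD13.l1 (Multiplicative.toAdd g) by
      exact fun g => h _ g le_rfl
    intro k
    induction k with
    | zero =>
      intro g hg
      have h0 : Multiplicative.toAdd g = 0 := QD13.l1_eq_zero (Nat.le_zero.mp hg)
      have hg1 : g = 1 := by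
        have := congrArg Multiplicative.ofAdd h0
        simpa using this
      exact ⟨[], by simp, by simp [hg1], by simp⟩
    | succ k ih =>
      intro g hg
      by_cases h0 : QD13.l1 (Multiplicative.toAdd g) = 0
      · have h0' : Multiplicative.toAdd g = 0 := QD13.l1_eq_zero h0
        have hg1 : g = 1 := by
          have := congrArg Multiplicative.ofAdd h0'
          simpa using this
        exact ⟨[], by simp, by simp [hg1], by simp⟩
      · have hne : ∃ i, Multiplicative.toAdd g i ≠ 0 := by
          by_contra hc
          push_neg at hc
          exact h0 (by simp [QD13.l1, hc])
        obtain ⟨i, hi⟩ := hne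
        set ε : ℤ := if 0 < Multiplicative.toAdd g i then 1 else -1 with hε
        set g' := g * (Multiplicative.ofAdd (Pi.single i ε))⁻¹ with hg'
        have hg'add : Multiplicative.toAdd g' = Multiplicative.toAdd g - Pi.single i ε := by
          rw [hg', toAdd_mul, toAdd_inv, toAdd_ofAdd, sub_eq_add_neg]
        have hl1 : QD13.l1 (Multiplicative.toAdd g') + 1
            = QD13.l1 (Multiplicative.toAdd g) := by
          have e1 := QD13.l1_eq (Multiplicative.toAdd g') i
          have e2 := QD13.l1_eq (Multiplicative.toAdd g) i
          have hoff : ∑ j ∈ Finset.univ.erase i, (Multiplicative.toAdd g' j).natAbs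
              = ∑ j ∈ Finset.univ.erase i, (Multiplicative.toAdd g j).natAbs := by
            apply Finset.sum_congr rfl
            intro j hj
            have hz : Multiplicative.toAdd g' j = Multiplicative.toAdd g j := by
              rw [hg'add]
              simp [Pi.single_eq_of_ne (Finset.ne_of_mem_erase hj)]
            rw [hz]
          have hati : (Multiplicative.toAdd g' i).natAbs + 1
              = (Multiplicative.toAdd g i).natAbs := by
            have h1 : Multiplicative.toAdd g' i = Multiplicative.toAdd g i - ε := by
              rw [hg'add]; simp
            rw [h1, hε]
            split_ifs with hlt <;> omega
          omega
        obtain ⟨l', hv', hp', hlen'⟩ := ih g' (by omega)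
        set lδ : List (FreeAb n) := if 0 < Multiplicative.toAdd g i then w i
          else ((w i).map (fun t => t⁻¹)).reverse with hlδ
        have hδv : ∀ s ∈ lδ, s ∈ S ∨ s⁻¹ ∈ S := by
          rw [hlδ]
          split_ifs
          · exact hwv i
          · intro s hs
            rw [List.mem_reverse, List.mem_map] at hs
            obtain ⟨t, ht, rfl⟩ := hs
            rcases hwv i t ht with h | h
            · right; simpa using h
            · left; exact h
        have hδp : lδ.prod = Multiplicative.ofAdd (Pi.single i ε) := by
          rw [hlδ, hε]
          split_ifs with hlt
          · exact hwp i
          · rw [← List.prod_inv_reverse, hwp i]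
            rw [← ofAdd_neg]
            congr 1
            simp [Pi.single_neg]
        have hδlen : lδ.length ≤ C2 := by
          rw [hlδ]
          split_ifs
          · exact hwlen i
          · simpa using hwlen i
        refine ⟨l' ++ lδ, ?_, ?_, ?_⟩
        · intro s hs
          rcases List.mem_append.mp hs with h | h
          · exact hv' s h
          · exact hδv s h
        · rw [List.prod_append, hp', hδp, hg', inv_mul_cancel_right]
        · have hmul : C2 * QD13.l1 (Multiplicative.toAdd g)
              = C2 * QD13.l1 (Multiplicative.toAdd g') + C2 := by
            rw [← hl1, Nat.mul_add, Nat.mul_one]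
          rw [List.length_append, hmul]
          omega
  -- interpolate far points
  set m0 : ℕ := C1 * L + C1 * C2 + 1 with hm0
  have far_l1 : ∀ r : FreeAb n, ((C2 * m0 : ℕ) : ℕ∞) < setWordDist S Y r →
      ∀ v ∈ Y, m0 < QD13.l1 (Multiplicative.toAdd r - Multiplicative.toAdd v) := by
    intro r hr v hv
    have h1 : ((C2 * m0 : ℕ) : ℕ∞) < wordDist S v r :=
      lt_of_lt_of_le hr (iInf₂_le v hv)
    obtain ⟨l, hvv, hp, hlen⟩ := hC2 (v⁻¹ * r)
    have h2 : wordDist S v r ≤ (l.length : ℕ∞) :=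
      QD13.wordDist_le_length hvv (by rw [hp]; group)
    have h3 : (C2 * m0 : ℕ) < l.length := by
      have := lt_of_lt_of_le h1 h2
      exact_mod_cast this
    have h4 : QD13.l1 (Multiplicative.toAdd (v⁻¹ * r))
        = QD13.l1 (Multiplicative.toAdd r - Multiplicative.toAdd v) := by
      rw [toAdd_mul, toAdd_inv, sub_eq_neg_add]
    rw [h4] at hlen
    have h5 : C2 * m0 < C2 * QD13.l1 (Multiplicative.toAdd r - Multiplicative.toAdd v) := by
      omega
    exact Nat.lt_of_mul_lt_mul_left h5
  -- pick deep far points and a far hyperplane point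
  obtain ⟨x', hxconn, hxfar⟩ := hdx (C2 * m0)
  obtain ⟨y', hyconn, hyfar⟩ := hdy (C2 * m0)
  obtain ⟨z, hz0, hzfar⟩ := hcon (C2 * m0)
  have hxb : ∀ v ∈ Y, m0 < QD13.l1 (Multiplicative.toAdd x' - Multiplicative.toAdd v) :=
    far_l1 x' (by exact_mod_cast hxfar)
  have hyb : ∀ v ∈ Y, m0 < QD13.l1 (Multiplicative.toAdd y' - Multiplicative.toAdd v) :=
    far_l1 y' (by exact_mod_cast hyfar)
  have hzb : ∀ v ∈ Y, m0 < QD13.l1 (Multiplicative.toAdd z - Multiplicative.toAdd v) :=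
    far_l1 z (by exact_mod_cast hzfar)
  have hYidx : ∀ v ∈ Y, Multiplicative.toAdd v idx = 0 := hY
  -- the vertical-then-horizontal path construction, done for a generic deep point
  have sidePath : ∀ p : FreeAb n,
      (∀ v ∈ Y, m0 < QD13.l1 (Multiplicative.toAdd p - Multiplicative.toAdd v)) →
      ∃ h : ℤ, m0 ≤ h.natAbs ∧ ConnectedInCayley S (wordNbhd S Y L)ᶜ p
        (Multiplicative.ofAdd (Function.update (Multiplicative.toAdd z) idx h)) := by
    intro p hpb
    set a : Fin n → ℤ := Multiplicative.toAdd p with ha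
    set σ : ℤ := if 0 ≤ a idx then 1 else -1 with hσ
    set b : Fin n → ℤ := Function.update a idx (a idx + σ * m0) with hb
    have habs : m0 ≤ (b idx).natAbs := by
      rw [hb, Function.update_self, hσ]
      split_ifs with hsgn <;> omega
    refine ⟨b idx, habs, ?_⟩
    -- first leg : p to ofAdd b
    have leg1 : ConnectedInCayley S (wordNbhd S Y L)ᶜ p (Multiplicative.ofAdd b) := by
      have := QD13.boxPath (Y := Y) (L := L) hC1 hC2 (QD13.l1 (b - a)) a b rfl ?_
      · exact this
      · intro r hr v hv
        have hvidx : Multiplicative.toAdd v idx = 0 := hYidx v hv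
        have hroff : ∀ j, j ≠ idx → r j = a j := by
          intro j hj
          have h1 := hr j
          rw [hb, Function.update_of_ne hj] at h1
          omega
        have hrisamesum : ∑ j ∈ Finset.univ.erase idx,
            ((r - Multiplicative.toAdd v) j).natAbs
            = ∑ j ∈ Finset.univ.erase idx, ((a - Multiplicative.toAdd v) j).natAbs := by
          apply Finset.sum_congr rfl
          intro j hj
          have := hroff j (Finset.ne_of_mem_erase hj)
          simp [this]
        have hidxbound : (a idx).natAbs ≤ (r idx).natAbs := by
          have h1 := hr idx
          rw [hb, Function.update_self] at h1
          rw [hσ] at h1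
          split_ifs at h1 <;> omega
        have e1 := QD13.l1_eq (r - Multiplicative.toAdd v) idx
        have e2 := QD13.l1_eq (a - Multiplicative.toAdd v) idx
        have ha1 : ((r - Multiplicative.toAdd v) idx).natAbs = (r idx).natAbs := by
          simp [hvidx]
        have ha2 : ((a - Multiplicative.toAdd v) idx).natAbs = (a idx).natAbs := by
          simp [hvidx]
        have hpv := hpb v hv
        omega
    -- second leg : ofAdd b to the pillar over z at height b idx
    have leg2 : ConnectedInCayley S (wordNbhd S Y L)ᶜ (Multiplicative.ofAdd b)
        (Multiplicative.ofAdd (Function.update (Multiplicative.toAdd z) idx (b idx))) := by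
      set q : Fin n → ℤ := Function.update (Multiplicative.toAdd z) idx (b idx) with hq
      apply QD13.boxPath hC1 hC2 (QD13.l1 (q - b)) b q rfl
      intro r hr v hv
      have hvidx : Multiplicative.toAdd v idx = 0 := hYidx v hv
      have hridx : r idx = b idx := by
        have h1 := hr idx
        rw [hq, Function.update_self] at h1
        omega
      have e1 := QD13.l1_eq (r - Multiplicative.toAdd v) idx
      have ha1 : ((r - Multiplicative.toAdd v) idx).natAbs = (b idx).natAbs := by
        simp [hvidx, hridx]
      omega
    exact leg1.trans leg2
  obtain ⟨h1, -, P1⟩ := sidePath x' hxb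
  obtain ⟨h2, -, P2⟩ := sidePath y' hyb
  -- the pillar leg joining the two heights over z
  have pillar : ConnectedInCayley S (wordNbhd S Y L)ᶜ
      (Multiplicative.ofAdd (Function.update (Multiplicative.toAdd z) idx h1))
      (Multiplicative.ofAdd (Function.update (Multiplicative.toAdd z) idx h2)) := by
    set q1 : Fin n → ℤ := Function.update (Multiplicative.toAdd z) idx h1 with hq1
    set q2 : Fin n → ℤ := Function.update (Multiplicative.toAdd z) idx h2 with hq2
    apply QD13.boxPath hC1 hC2 (QD13.l1 (q2 - q1)) q1 q2 rfl
    intro r hr v hv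
    have hvidx : Multiplicative.toAdd v idx = 0 := hYidx v hv
    have hzidx : Multiplicative.toAdd z idx = 0 := hz0
    have hroff : ∀ j, j ≠ idx → r j = Multiplicative.toAdd z j := by
      intro j hj
      have h1 := hr j
      rw [hq1, hq2, Function.update_of_ne hj, Function.update_of_ne hj] at h1
      omega
    have hsame : ∑ j ∈ Finset.univ.erase idx, ((r - Multiplicative.toAdd v) j).natAbs
        = ∑ j ∈ Finset.univ.erase idx,
          ((Multiplicative.toAdd z - Multiplicative.toAdd v) j).natAbs := by
      apply Finset.sum_congr rfl
      intro j hj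
      have := hroff j (Finset.ne_of_mem_erase hj)
      simp [this]
    have e1 := QD13.l1_eq (r - Multiplicative.toAdd v) idx
    have e2 := QD13.l1_eq (Multiplicative.toAdd z - Multiplicative.toAdd v) idx
    have ha2 : ((Multiplicative.toAdd z - Multiplicative.toAdd v) idx).natAbs = 0 := by
      simp [hvidx, hzidx]
    have hzv := hzb v hv
    omega
  -- assemble the contradiction
  exact hnc (((hxconn.trans (P1.trans (pillar.trans (QD13.conn_symm P2)))).trans
    (QD13.conn_symm hyconn)))
end CoarseGraph
end

section
/- Let Γ be a finite simple graph and u ∈ V(Γ) a vertex such that star(u) ≠ Γ. Then the right-angled Artin group A(Γ) splits non-trivially over a subgroup isomorphic to ⟨star(u)⟩, the subgroup of A(Γ) generated by the vertices of the star of u. Concretely, A(Γ) is isomorphic to the amalgamated free product of A(star(u)) and A(Γ) along the embeddings φ₁: ⟨star(u)⟩ → A(star(u)) sending u to u² and fixing each vertex of link(u), and φ₂: ⟨star(u)⟩ → A(Γ) the inclusion, and this splitting is non-trivial. -/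
/-! ## Coarse geometry of graphs -/

section CoarseGraph

variable {W : Type*}

section RaagHelpers

variable {V : Type*} {G : Type*} [Group G] {Γ : SimpleGraph V}

theorem raagRels_lift {f : V → G}
    (hf : ∀ a b, Γ.Adj a b → Commute (f a) (f b)) :
    ∀ r ∈ raagRels Γ, FreeGroup.lift f r = 1 := by
  rintro r ⟨a, b, hab, rfl⟩
  simp only [map_mul, map_inv, FreeGroup.lift_apply_of]
  rw [(hf a b hab).eq]
  group

def raagLift (f : V → G) (hf : ∀ a b, Γ.Adj a b → Commute (f a) (f b)) : RAAG Γ →* G :=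
  PresentedGroup.toGroup (raagRels_lift hf)

@[simp] theorem raagLift_gen {f : V → G} (hf : ∀ a b, Γ.Adj a b → Commute (f a) (f b)) (v : V) :
    raagLift f hf (RAAG.gen Γ v) = f v :=
  PresentedGroup.toGroup.of _

open scoped commutatorElement

theorem gen_commute {a b : V} (h : Γ.Adj a b) :
    Commute (RAAG.gen Γ a) (RAAG.gen Γ b) := by
  have hr : (FreeGroup.of a * FreeGroup.of b * (FreeGroup.of a)⁻¹ * (FreeGroup.of b)⁻¹ : FreeGroup V)
      ∈ Subgroup.normalClosure (raagRels Γ) :=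
    Subgroup.subset_normalClosure ⟨a, b, h, rfl⟩
  have h1 : PresentedGroup.mk (raagRels Γ)
      (FreeGroup.of a * FreeGroup.of b * (FreeGroup.of a)⁻¹ * (FreeGroup.of b)⁻¹) = 1 :=
    (QuotientGroup.eq_one_iff _).mpr hr
  simp only [map_mul, map_inv] at h1
  have h2 : ⁅RAAG.gen Γ a, RAAG.gen Γ b⁆ = 1 := by
    rw [commutatorElement_def]; exact h1
  exact commutatorElement_eq_one_iff_commute.mp h2

end RaagHelpers

section Star

open scoped Classical

variable {V : Type*} (Γ : SimpleGraph V) (u : V)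

/-- The distinguished vertex `u` as a vertex of the star. -/
def starU : (starOfVertex Γ u : Set V) := ⟨u, Or.inl rfl⟩

/-- `φ₁ : A(star) → A(star)`, `u ↦ u²`, fixing the link. -/
noncomputable def starPhi1 : RAAG (Γ.induce (starOfVertex Γ u)) →* RAAG (Γ.induce (starOfVertex Γ u)) :=
  raagLift (fun s => RAAG.gen (Γ.induce (starOfVertex Γ u)) s ^ (if (s : V) = u then 2 else 1))
    (fun a b hab => (gen_commute hab).pow_pow _ _)

/-- `φ₂ : A(star) → A(Γ)`, the canonical map. -/
noncomputable def starPhi2 : RAAG (Γ.induce (starOfVertex Γ u)) →* RAAG Γ :=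
  raagLift (fun s => RAAG.gen Γ (s : V)) (fun a b hab => gen_commute hab)

theorem starPhi1_genU : starPhi1 Γ u (RAAG.gen _ (starU Γ u)) = RAAG.gen _ (starU Γ u) ^ 2 := by
  rw [starPhi1, raagLift_gen, if_pos (show ((starU Γ u : V)) = u from rfl)]

theorem starPhi1_gen_link {v : V} (hv : Γ.Adj u v) :
    starPhi1 Γ u (RAAG.gen _ (⟨v, Or.inr hv⟩ : starOfVertex Γ u)) =
      RAAG.gen _ (⟨v, Or.inr hv⟩ : starOfVertex Γ u) := by
  rw [starPhi1, raagLift_gen, if_neg hv.ne', pow_one]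

theorem starPhi2_gen (s : starOfVertex Γ u) :
    starPhi2 Γ u (RAAG.gen _ s) = RAAG.gen Γ (s : V) := by
  rw [starPhi2, raagLift_gen]

/-- Exponent sum of `u`. -/
noncomputable def starAlpha : RAAG (Γ.induce (starOfVertex Γ u)) →* Multiplicative ℤ :=
  raagLift (fun s => if (s : V) = u then Multiplicative.ofAdd (1 : ℤ) else 1)
    (fun _ _ _ => Commute.all _ _)

/-- Kill `u`. -/
noncomputable def starBeta :
    RAAG (Γ.induce (starOfVertex Γ u)) →* RAAG (Γ.induce (starOfVertex Γ u)) :=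
  raagLift (fun s => if (s : V) = u then 1 else RAAG.gen (Γ.induce (starOfVertex Γ u)) s)
    (by
      intro a b hab
      split_ifs
      · exact Commute.one_left _
      · exact Commute.one_left _
      · exact Commute.one_right _
      · exact gen_commute hab)

theorem starU_central (x : RAAG (Γ.induce (starOfVertex Γ u))) :
    Commute (RAAG.gen _ (starU Γ u)) x := by
  have hx : x ∈ Subgroup.centralizer {RAAG.gen (Γ.induce (starOfVertex Γ u)) (starU Γ u)} := by
    have htop : Subgroup.closure (Set.range (PresentedGroup.of
        (rels := raagRels (Γ.induce (starOfVertex Γ u))))) ≤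
        Subgroup.centralizer {RAAG.gen (Γ.induce (starOfVertex Γ u)) (starU Γ u)} := by
      rw [Subgroup.closure_le]
      rintro _ ⟨s, rfl⟩
      rw [SetLike.mem_coe, Subgroup.mem_centralizer_iff]
      rintro _ rfl
      by_cases h : (s : V) = u
      · have hs : s = starU Γ u := Subtype.ext h
        rw [hs]
      · rcases s.2 with h' | h'
        · exact absurd h' h
        · exact (gen_commute (Γ := Γ.induce (starOfVertex Γ u))
            (a := starU Γ u) (b := s) h').eq
    have : x ∈ (⊤ : Subgroup _) := trivial
    rw [← PresentedGroup.closure_range_of] at this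
    exact htop this
  exact Subgroup.mem_centralizer_iff.mp hx _ rfl

/-- Reconstruction: every element is `u^(α x) * β x`. -/
noncomputable def starRecon : RAAG (Γ.induce (starOfVertex Γ u)) →*
    RAAG (Γ.induce (starOfVertex Γ u)) :=
  MonoidHom.mk' (fun x => RAAG.gen _ (starU Γ u) ^ (starAlpha Γ u x).toAdd * starBeta Γ u x)
    (by
      intro x y
      rw [map_mul (starAlpha Γ u), map_mul (starBeta Γ u), toAdd_mul, zpow_add]
      have h1 : Commute (RAAG.gen _ (starU Γ u) ^ (starAlpha Γ u y).toAdd) (starBeta Γ u x) :=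
        ((starU_central Γ u (starBeta Γ u x)).zpow_left _)
      calc RAAG.gen _ (starU Γ u) ^ (starAlpha Γ u x).toAdd *
            RAAG.gen _ (starU Γ u) ^ (starAlpha Γ u y).toAdd *
            (starBeta Γ u x * starBeta Γ u y)
          = RAAG.gen _ (starU Γ u) ^ (starAlpha Γ u x).toAdd *
            (RAAG.gen _ (starU Γ u) ^ (starAlpha Γ u y).toAdd * starBeta Γ u x) *
            starBeta Γ u y := by group
        _ = RAAG.gen _ (starU Γ u) ^ (starAlpha Γ u x).toAdd *
            (starBeta Γ u x * RAAG.gen _ (starU Γ u) ^ (starAlpha Γ u y).toAdd) *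
            starBeta Γ u y := by rw [h1.eq]
        _ = _ := by group)

theorem starRecon_eq_id : starRecon Γ u = MonoidHom.id _ := by
  apply PresentedGroup.ext
  intro s
  show RAAG.gen _ (starU Γ u) ^ (starAlpha Γ u (RAAG.gen _ s)).toAdd *
      starBeta Γ u (RAAG.gen _ s) = RAAG.gen _ s
  rw [starAlpha, starBeta, raagLift_gen, raagLift_gen]
  by_cases h : (s : V) = u
  · have hs : s = starU Γ u := Subtype.ext h
    rw [if_pos h, if_pos h, hs, toAdd_ofAdd, zpow_one, mul_one]
  · rw [if_neg h, if_neg h, toAdd_one, zpow_zero, one_mul]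

theorem starAlpha_comp_phi1 (x : RAAG (Γ.induce (starOfVertex Γ u))) :
    starAlpha Γ u (starPhi1 Γ u x) = starAlpha Γ u x * starAlpha Γ u x := by
  have : (starAlpha Γ u).comp (starPhi1 Γ u) = starAlpha Γ u * starAlpha Γ u := by
    apply PresentedGroup.ext
    intro s
    rw [MonoidHom.mul_apply, MonoidHom.comp_apply]
    show starAlpha Γ u (starPhi1 Γ u (RAAG.gen _ s)) = _
    rw [starPhi1, raagLift_gen, map_pow, starAlpha, raagLift_gen]
    by_cases h : (s : V) = u
    · rw [if_pos h, if_pos h]; rfl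
    · rw [if_neg h, if_neg h]; simp
  calc starAlpha Γ u (starPhi1 Γ u x) = ((starAlpha Γ u).comp (starPhi1 Γ u)) x := rfl
    _ = (starAlpha Γ u * starAlpha Γ u) x := by rw [this]
    _ = _ := rfl

theorem starBeta_comp_phi1 (x : RAAG (Γ.induce (starOfVertex Γ u))) :
    starBeta Γ u (starPhi1 Γ u x) = starBeta Γ u x := by
  have : (starBeta Γ u).comp (starPhi1 Γ u) = starBeta Γ u := by
    apply PresentedGroup.ext
    intro s
    rw [MonoidHom.comp_apply]
    show starBeta Γ u (starPhi1 Γ u (RAAG.gen _ s)) = starBeta Γ u (RAAG.gen _ s)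
    rw [starPhi1, raagLift_gen, map_pow, starBeta, raagLift_gen]
    by_cases h : (s : V) = u
    · rw [if_pos h, one_pow]
    · rw [if_neg h, if_neg h, pow_one]
  calc starBeta Γ u (starPhi1 Γ u x) = ((starBeta Γ u).comp (starPhi1 Γ u)) x := rfl
    _ = starBeta Γ u x := by rw [this]

theorem starPhi1_injective : Function.Injective (starPhi1 Γ u) := by
  intro x y h
  have hα : starAlpha Γ u x = starAlpha Γ u y := by
    have h2 : starAlpha Γ u x * starAlpha Γ u x = starAlpha Γ u y * starAlpha Γ u y := by
      rw [← starAlpha_comp_phi1 Γ u x, h, starAlpha_comp_phi1]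
    have := congrArg Multiplicative.toAdd h2
    simp only [toAdd_mul] at this
    exact Multiplicative.toAdd.injective (by omega)
  have hβ : starBeta Γ u x = starBeta Γ u y := by
    rw [← starBeta_comp_phi1 Γ u x, h, starBeta_comp_phi1]
  calc x = starRecon Γ u x := by rw [starRecon_eq_id]; rfl
    _ = starRecon Γ u y := by
        show RAAG.gen _ (starU Γ u) ^ (starAlpha Γ u x).toAdd * starBeta Γ u x = _
        rw [hα, hβ]; rfl
    _ = y := by rw [starRecon_eq_id]; rfl

theorem starPhi1_not_surjective : ¬ Function.Surjective (starPhi1 Γ u) := by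
  intro hs
  obtain ⟨x, hx⟩ := hs (RAAG.gen _ (starU Γ u))
  have h1 : starAlpha Γ u (starPhi1 Γ u x) = starAlpha Γ u x * starAlpha Γ u x :=
    starAlpha_comp_phi1 Γ u x
  rw [hx] at h1
  have h2 : starAlpha Γ u (RAAG.gen _ (starU Γ u)) = Multiplicative.ofAdd (1 : ℤ) := by
    rw [starAlpha, raagLift_gen, if_pos (show ((starU Γ u : V)) = u from rfl)]
  rw [h2] at h1
  have := congrArg Multiplicative.toAdd h1
  simp only [toAdd_mul, toAdd_ofAdd] at this
  omega

/-- Retraction `A(Γ) → A(star)` killing vertices outside the star. -/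
noncomputable def starRho : RAAG Γ →* RAAG (Γ.induce (starOfVertex Γ u)) :=
  raagLift (fun v => if h : v ∈ starOfVertex Γ u
      then RAAG.gen (Γ.induce (starOfVertex Γ u)) ⟨v, h⟩ else 1)
    (by
      intro a b hab
      by_cases ha : a ∈ starOfVertex Γ u
      · by_cases hb : b ∈ starOfVertex Γ u
        · rw [dif_pos ha, dif_pos hb]
          exact gen_commute (Γ := Γ.induce (starOfVertex Γ u)) (a := ⟨a, ha⟩) (b := ⟨b, hb⟩) hab
        · rw [dif_neg hb]; exact Commute.one_right _
      · rw [dif_neg ha]; exact Commute.one_left _)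

theorem starRho_comp_phi2 : (starRho Γ u).comp (starPhi2 Γ u) = MonoidHom.id _ := by
  apply PresentedGroup.ext
  intro s
  rw [MonoidHom.comp_apply]
  show starRho Γ u (starPhi2 Γ u (RAAG.gen _ s)) = RAAG.gen _ s
  rw [starPhi2_gen, starRho, raagLift_gen, dif_pos s.2]

theorem starPhi2_injective : Function.Injective (starPhi2 Γ u) := by
  intro x y h
  have hx := congrArg (starRho Γ u) h
  calc x = (starRho Γ u).comp (starPhi2 Γ u) x := by rw [starRho_comp_phi2]; rfl
    _ = (starRho Γ u).comp (starPhi2 Γ u) y := hx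
    _ = y := by rw [starRho_comp_phi2]; rfl

theorem starPhi2_not_surjective (hstar : starOfVertex Γ u ≠ Set.univ) :
    ¬ Function.Surjective (starPhi2 Γ u) := by
  obtain ⟨w, hw⟩ := Set.ne_univ_iff_exists_notMem _ |>.mp hstar
  set π : RAAG Γ →* Multiplicative ℤ :=
    raagLift (fun v => if v = w then Multiplicative.ofAdd (1 : ℤ) else 1)
      (fun _ _ _ => Commute.all _ _) with hπ
  intro hs
  obtain ⟨x, hx⟩ := hs (RAAG.gen Γ w)
  have hcomp : π.comp (starPhi2 Γ u) = 1 := by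
    apply PresentedGroup.ext
    intro s
    rw [MonoidHom.comp_apply]
    show π (starPhi2 Γ u (RAAG.gen _ s)) = 1
    rw [starPhi2_gen, hπ, raagLift_gen, if_neg]
    intro hsw
    exact hw (hsw ▸ s.2)
  have h1 : π (starPhi2 Γ u x) = 1 := by
    calc π (starPhi2 Γ u x) = (π.comp (starPhi2 Γ u)) x := rfl
      _ = 1 := by rw [hcomp]; rfl
  rw [hx, hπ, raagLift_gen, if_pos rfl] at h1
  have := congrArg Multiplicative.toAdd h1
  simp at this

theorem starPhi2_range : (starPhi2 Γ u).range = vertexSubgroup Γ (starOfVertex Γ u) := by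
  rw [MonoidHom.range_eq_map, ← PresentedGroup.closure_range_of,
    MonoidHom.map_closure, ← Set.range_comp]
  unfold vertexSubgroup
  rw [Set.image_eq_range]
  congr 1

noncomputable def starSubgroupIso :
    RAAG (Γ.induce (starOfVertex Γ u)) ≃* vertexSubgroup Γ (starOfVertex Γ u) :=
  (MonoidHom.ofInjective (starPhi2_injective Γ u)).trans
    (MulEquiv.subgroupCongr (starPhi2_range Γ u))

end Star

section Amalgam

open scoped Classical

variable {V : Type*} (Γ : SimpleGraph V) (u : V)

noncomputable def amalMk : Monoid.Coprod (RAAG (Γ.induce (starOfVertex Γ u))) (RAAG Γ) →*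
    AmalgamatedProduct (starPhi1 Γ u) (starPhi2 Γ u) :=
  QuotientGroup.mk' _

theorem amalMk_rel (c : RAAG (Γ.induce (starOfVertex Γ u))) :
    amalMk Γ u (Monoid.Coprod.inl (starPhi1 Γ u c)) =
      amalMk Γ u (Monoid.Coprod.inr (starPhi2 Γ u c)) := by
  have hmem : Monoid.Coprod.inl (starPhi1 Γ u c) * (Monoid.Coprod.inr (starPhi2 Γ u c))⁻¹ ∈
      Subgroup.normalClosure
        (Set.range fun c => Monoid.Coprod.inl (starPhi1 Γ u c) *
          (Monoid.Coprod.inr (starPhi2 Γ u c))⁻¹) :=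
    Subgroup.subset_normalClosure ⟨c, rfl⟩
  have h1 : amalMk Γ u (Monoid.Coprod.inl (starPhi1 Γ u c) *
      (Monoid.Coprod.inr (starPhi2 Γ u c))⁻¹) = 1 :=
    (QuotientGroup.eq_one_iff _).mpr hmem
  rw [map_mul, map_inv, mul_inv_eq_one] at h1
  exact h1

/-- The endomorphism of `A(Γ)` doubling `u`. -/
noncomputable def doubleU : RAAG Γ →* RAAG Γ :=
  raagLift (fun v => RAAG.gen Γ v ^ (if v = u then 2 else 1))
    (fun a b hab => (gen_commute hab).pow_pow _ _)

theorem phi2_comp_phi1_eq : (starPhi2 Γ u).comp (starPhi1 Γ u) =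
    (doubleU Γ u).comp (starPhi2 Γ u) := by
  apply PresentedGroup.ext
  intro s
  rw [MonoidHom.comp_apply, MonoidHom.comp_apply]
  show starPhi2 Γ u (starPhi1 Γ u (RAAG.gen _ s)) = doubleU Γ u (starPhi2 Γ u (RAAG.gen _ s))
  rw [starPhi1, raagLift_gen, map_pow, starPhi2_gen, doubleU, raagLift_gen]

noncomputable def amalPsi : AmalgamatedProduct (starPhi1 Γ u) (starPhi2 Γ u) →* RAAG Γ :=
  QuotientGroup.lift _ (Monoid.Coprod.lift (starPhi2 Γ u) (doubleU Γ u))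
    (by
      apply Subgroup.normalClosure_le_normal
      rintro _ ⟨c, rfl⟩
      rw [SetLike.mem_coe, MonoidHom.mem_ker, map_mul, map_inv,
        Monoid.Coprod.lift_apply_inl, Monoid.Coprod.lift_apply_inr, mul_inv_eq_one]
      calc starPhi2 Γ u (starPhi1 Γ u c) = ((starPhi2 Γ u).comp (starPhi1 Γ u)) c := rfl
        _ = ((doubleU Γ u).comp (starPhi2 Γ u)) c := by rw [phi2_comp_phi1_eq]
        _ = doubleU Γ u (starPhi2 Γ u c) := rfl)

theorem amalPsi_amalMk (x : Monoid.Coprod (RAAG (Γ.induce (starOfVertex Γ u))) (RAAG Γ)) :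
    amalPsi Γ u (amalMk Γ u x) = Monoid.Coprod.lift (starPhi2 Γ u) (doubleU Γ u) x :=
  rfl

noncomputable def amalPhi : RAAG Γ →* AmalgamatedProduct (starPhi1 Γ u) (starPhi2 Γ u) :=
  raagLift (fun v => if v = u
      then amalMk Γ u (Monoid.Coprod.inl (RAAG.gen (Γ.induce (starOfVertex Γ u)) (starU Γ u)))
      else amalMk Γ u (Monoid.Coprod.inr (RAAG.gen Γ v)))
    (by
      intro a b hab
      by_cases ha : a = u
      · have hab' : Γ.Adj u b := ha ▸ hab
        rw [if_pos ha, if_neg hab'.ne']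
        have hrel := amalMk_rel Γ u (RAAG.gen _ (⟨b, Or.inr hab'⟩ : starOfVertex Γ u))
        rw [starPhi1_gen_link Γ u hab', starPhi2_gen] at hrel
        rw [← hrel]
        exact ((gen_commute (Γ := Γ.induce (starOfVertex Γ u)) (a := starU Γ u)
          (b := ⟨b, Or.inr hab'⟩) hab').map ((amalMk Γ u).comp Monoid.Coprod.inl))
      · by_cases hb : b = u
        · have hab' : Γ.Adj u a := hb ▸ hab.symm
          rw [if_pos hb, if_neg ha]
          have hrel := amalMk_rel Γ u (RAAG.gen _ (⟨a, Or.inr hab'⟩ : starOfVertex Γ u))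
          rw [starPhi1_gen_link Γ u hab', starPhi2_gen] at hrel
          rw [← hrel]
          exact ((gen_commute (Γ := Γ.induce (starOfVertex Γ u)) (a := starU Γ u)
            (b := ⟨a, Or.inr hab'⟩) hab').map
              ((amalMk Γ u).comp Monoid.Coprod.inl)).symm
        · rw [if_neg ha, if_neg hb]
          exact (gen_commute hab).map ((amalMk Γ u).comp Monoid.Coprod.inr))

theorem amalPsi_comp_amalPhi : (amalPsi Γ u).comp (amalPhi Γ u) = MonoidHom.id (RAAG Γ) := by
  apply PresentedGroup.ext
  intro v
  rw [MonoidHom.comp_apply, MonoidHom.id_apply]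
  show amalPsi Γ u (amalPhi Γ u (RAAG.gen Γ v)) = RAAG.gen Γ v
  rw [amalPhi, raagLift_gen]
  by_cases h : v = u
  · subst h
    rw [if_pos rfl, amalPsi_amalMk, Monoid.Coprod.lift_apply_inl, starPhi2_gen]
    rfl
  · rw [if_neg h, amalPsi_amalMk, Monoid.Coprod.lift_apply_inr, doubleU, raagLift_gen,
      if_neg h, pow_one]

theorem amalPhi_comp_amalPsi : (amalPhi Γ u).comp (amalPsi Γ u) =
    MonoidHom.id (AmalgamatedProduct (starPhi1 Γ u) (starPhi2 Γ u)) := by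
  apply QuotientGroup.monoidHom_ext
  apply Monoid.Coprod.hom_ext
  · apply PresentedGroup.ext
    intro s
    simp only [MonoidHom.comp_apply]
    show amalPhi Γ u (amalPsi Γ u (amalMk Γ u (Monoid.Coprod.inl (RAAG.gen _ s)))) =
      amalMk Γ u (Monoid.Coprod.inl (RAAG.gen _ s))
    rw [amalPsi_amalMk, Monoid.Coprod.lift_apply_inl, starPhi2_gen, amalPhi, raagLift_gen]
    by_cases h : (s : V) = u
    · have hs : s = starU Γ u := Subtype.ext h
      rw [if_pos h, hs]
    · rw [if_neg h]
      rcases s.2 with h' | h'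
      · exact absurd h' h
      · have hrel := amalMk_rel Γ u (RAAG.gen _ s)
        have hφ₁ : starPhi1 Γ u (RAAG.gen _ s) = RAAG.gen _ s := by
          rw [starPhi1, raagLift_gen, if_neg h, pow_one]
        rw [hφ₁, starPhi2_gen] at hrel
        exact hrel.symm
  · apply PresentedGroup.ext
    intro v
    simp only [MonoidHom.comp_apply]
    show amalPhi Γ u (amalPsi Γ u (amalMk Γ u (Monoid.Coprod.inr (RAAG.gen Γ v)))) =
      amalMk Γ u (Monoid.Coprod.inr (RAAG.gen Γ v))
    rw [amalPsi_amalMk, Monoid.Coprod.lift_apply_inr, doubleU, raagLift_gen]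
    by_cases h : v = u
    · subst h
      rw [if_pos rfl, map_pow, amalPhi, raagLift_gen, if_pos rfl, ← map_pow, ← map_pow,
        ← starPhi1_genU, amalMk_rel, starPhi2_gen]
      rfl
    · rw [if_neg h, pow_one, amalPhi, raagLift_gen, if_neg h]

noncomputable def amalIso : RAAG Γ ≃* AmalgamatedProduct (starPhi1 Γ u) (starPhi2 Γ u) :=
  MonoidHom.toMulEquiv (amalPhi Γ u) (amalPsi Γ u)
    (amalPsi_comp_amalPhi Γ u) (amalPhi_comp_amalPsi Γ u)

end Amalgam


/-- Let `u` be a vertex of a finite simple graph `Γ` with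
`star(u) ≠ Γ`. Then `A(Γ)` splits non-trivially over a subgroup isomorphic to
`⟨star(u)⟩`: concretely, `A(Γ)` is the amalgamated product of `A(star(u))` and `A(Γ)`
along the embedding `φ₁` of `A(star(u))` into itself sending `u` to `u²` and fixing each
vertex of `link(u)`, and the canonical embedding `φ₂ : A(star(u)) → A(Γ)`; moreover this
splitting is non-trivial. -/
theorem raag_splits_over_star {V : Type} [Fintype V] (Γ : SimpleGraph V) (u : V)
    (hstar : starOfVertex Γ u ≠ Set.univ) :
    ∃ (φ₁ : RAAG (Γ.induce (starOfVertex Γ u)) →* RAAG (Γ.induce (starOfVertex Γ u)))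
      (φ₂ : RAAG (Γ.induce (starOfVertex Γ u)) →* RAAG Γ),
      φ₁ (RAAG.gen (Γ.induce (starOfVertex Γ u)) ⟨u, Or.inl rfl⟩) =
        (RAAG.gen (Γ.induce (starOfVertex Γ u)) ⟨u, Or.inl rfl⟩) ^ 2 ∧
      (∀ (v : V) (hv : Γ.Adj u v),
        φ₁ (RAAG.gen (Γ.induce (starOfVertex Γ u)) ⟨v, Or.inr hv⟩) =
          RAAG.gen (Γ.induce (starOfVertex Γ u)) ⟨v, Or.inr hv⟩) ∧
      (∀ w : starOfVertex Γ u,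
        φ₂ (RAAG.gen (Γ.induce (starOfVertex Γ u)) w) = RAAG.gen Γ ↑w) ∧
      Function.Injective φ₁ ∧ Function.Injective φ₂ ∧
      ¬ Function.Surjective φ₁ ∧ ¬ Function.Surjective φ₂ ∧
      Nonempty (RAAG (Γ.induce (starOfVertex Γ u)) ≃*
        vertexSubgroup Γ (starOfVertex Γ u)) ∧
      Nonempty (RAAG Γ ≃* AmalgamatedProduct φ₁ φ₂) := by
  refine ⟨starPhi1 Γ u, starPhi2 Γ u, starPhi1_genU Γ u,
    (fun v hv => starPhi1_gen_link Γ u hv), (fun w => starPhi2_gen Γ u w),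
    starPhi1_injective Γ u, starPhi2_injective Γ u,
    starPhi1_not_surjective Γ u, starPhi2_not_surjective Γ u hstar,
    ⟨starSubgroupIso Γ u⟩, ⟨amalIso Γ u⟩⟩
end CoarseGraph
end

section
/- Let G be a finitely generated group equipped with a word metric from a finite generating set, g ∈ G an element, and H, K ≤ G two subgroups. If the coset gH is contained in some bounded metric neighbourhood of K, then gHg⁻¹ is virtually contained in K, i.e. some finite-index subgroup of gHg⁻¹ is contained in K. -/
/-! ## Coarse geometry of graphs -/

section CoarseGraph

variable {W : Type*}

private lemma myBall_finite {G : Type*} [Group G] {S : Set G} (hS : S.Finite) (D : ℕ) :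
    {x : G | ∃ l : List G, (∀ s ∈ l, s ∈ S ∨ s⁻¹ ∈ S) ∧ l.length ≤ D ∧ x = l.prod}.Finite := by
  classical
  set T : Set G := S ∪ (fun x : G => x⁻¹) ⁻¹' S with hTdef
  have hT : T.Finite := hS.union (hS.preimage inv_injective.injOn)
  have : Finite ↥T := hT
  have hfin : ({l : List ↥T | l.length ≤ D}).Finite := List.finite_length_le ↥T D
  have himg := hfin.image (fun l : List ↥T => (l.map Subtype.val).prod)
  refine himg.subset ?_
  rintro x ⟨l, hl, hlen, rfl⟩
  refine ⟨l.attach.map (fun s => (⟨s.1, hl s.1 s.2⟩ : ↥T)), by simpa using hlen, ?_⟩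
  simp [List.map_map, Function.comp]

/-- Let `G` be a finitely generated group with a word metric coming
from a finite generating set `S`, let `g ∈ G` and let `H, K ≤ G` be subgroups. If the
coset `gH` is contained in some bounded neighbourhood of `K`, then `gHg⁻¹` is virtually
contained in `K`: some finite-index subgroup of `gHg⁻¹` is contained in `K`. -/
theorem conjugate_virtually_contained_of_coset_in_nbhd {G : Type*} [Group G]
    (S : Set G) (hS : IsFinGenSet S) (g : G) (H K : Subgroup G)
    (D : ℕ) (hD : ∀ h ∈ H, g * h ∈ wordNbhd S (K : Set G) D) :
    ∃ H' : Subgroup G, H' ≤ H.map (MulAut.conj g).toMonoidHom ∧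
      (H'.subgroupOf (H.map (MulAut.conj g).toMonoidHom)).FiniteIndex ∧
      H' ≤ K := by
  classical
  obtain ⟨hSfin, -⟩ := hS
  set Hb := H.map (MulAut.conj g).toMonoidHom with hHb
  refine ⟨Hb ⊓ K, inf_le_left, ?_, inf_le_right⟩
  set W := {x : G | ∃ l : List G, (∀ s ∈ l, s ∈ S ∨ s⁻¹ ∈ S) ∧ l.length ≤ D ∧ x = l.prod}
    with hWdef
  have hW : W.Finite := myBall_finite hSfin D
  have key : ∀ h : G, h ∈ Hb →
      ∃ w ∈ W, (QuotientGroup.mk h : G ⧸ K) = QuotientGroup.mk (g * w⁻¹) := by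
    intro h hh
    obtain ⟨h₀, hh₀, rfl⟩ := hh
    have h1 := hD h₀⁻¹ (H.inv_mem hh₀)
    have h2 : setWordDist S (K : Set G) (g * h₀⁻¹) < (D : ℕ∞) + 1 :=
      lt_of_le_of_lt h1 (by exact_mod_cast Nat.lt_succ_self D)
    rw [setWordDist, iInf_lt_iff] at h2
    obtain ⟨k, hk⟩ := h2
    rw [iInf_lt_iff] at hk
    obtain ⟨hkK, hk⟩ := hk
    rw [wordDist, sInf_lt_iff] at hk
    obtain ⟨n, ⟨l, hl, hprod, rfl⟩, hn⟩ := hk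
    have hlen : l.length ≤ D := by
      have : (l.length : ℕ∞) < ((D + 1 : ℕ) : ℕ∞) := by exact_mod_cast hn
      exact Nat.lt_succ_iff.mp (by exact_mod_cast this)
    refine ⟨l.prod, ⟨l, hl, hlen, rfl⟩, ?_⟩
    rw [QuotientGroup.eq]
    have heq : ((MulAut.conj g).toMonoidHom h₀)⁻¹ * (g * l.prod⁻¹)
        = (g * h₀⁻¹) * l.prod⁻¹ := by
      simp only [MulEquiv.coe_toMonoidHom, MulAut.conj_apply]
      group
    rw [heq, hprod]
    simpa using hkK
  have hfinq : Finite (↥Hb ⧸ ((Hb ⊓ K).subgroupOf Hb)) := by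
    set Tset : Set (G ⧸ K) := (fun w => (QuotientGroup.mk (g * w⁻¹) : G ⧸ K)) '' W
      with hTset
    have hTfin : Tset.Finite := hW.image _
    have : Finite ↥Tset := hTfin
    let f : ↥Hb ⧸ ((Hb ⊓ K).subgroupOf Hb) → G ⧸ K :=
      Quotient.map' (fun h : ↥Hb => (h : G)) (by
        intro a b hab
        rw [QuotientGroup.leftRel_apply] at hab ⊢
        simpa using (Subgroup.mem_subgroupOf.mp hab).2)
    have hfinj : Function.Injective f := by
      intro a b
      induction a using Quotient.inductionOn' with
      | h x =>
        induction b using Quotient.inductionOn' with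
        | h y =>
          intro hab
          apply Quotient.sound'
          rw [QuotientGroup.leftRel_apply]
          have hxy := Quotient.exact' hab
          rw [QuotientGroup.leftRel_apply] at hxy
          rw [Subgroup.mem_subgroupOf]
          exact Subgroup.mem_inf.mpr ⟨(x⁻¹ * y).2, by simpa using hxy⟩
    have hrange : ∀ q, f q ∈ Tset := by
      intro q
      induction q using Quotient.inductionOn' with
      | h x =>
        obtain ⟨w, hwW, hw⟩ := key (x : G) x.2
        exact ⟨w, hwW, hw.symm⟩
    exact Finite.of_injective (fun q => (⟨f q, hrange q⟩ : ↥Tset))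
      (fun a b hab => hfinj (by simpa using congrArg Subtype.val hab))
  exact Subgroup.finiteIndex_of_finite_quotient
end CoarseGraph
end
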